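/- arXiv:2008.04566 — 3 statements merged into one kernel-verified Lean document; each statement's English description precedes it below -/
import Mathlib

section
/- Let ϱ ∈ (0,1/2), a > 1, ε ∈ (0,1/2), and suppose the polytope P^{α_a}_{m_a} is nonempty and solves Conditioning Problem 1 for G_{ϱ,ε}. Then the union U = P^{α_a}_{m_a} ∪ σ₃₂₁(P^{α_a}_{m_a}) is an AsIUP for G_{ϱ,ε}: G_{ϱ,ε}(U) ⊆ U and Σ(U) ∩ U = ∅, where Σ(x) = (1−x₁, 1−x₂). -/
open Set

/-- A constraint matrix: a pair of vectors of lower and upper bounds in `ℝ^e`. -/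
abbrev CM (e : ℕ) := (Fin e → ℝ) × (Fin e → ℝ)

/-- The open polytope `P^α_m` associated with a coefficient matrix `α` and a
constraint matrix `m`. -/
def PolySet {e d : ℕ} (α : Matrix (Fin e) (Fin d) ℝ) (m : CM e) : Set (Fin d → ℝ) :=
  {x | ∀ i, m.1 i < α.mulVec x i ∧ α.mulVec x i < m.2 i}

/-- A coefficient matrix is non-degenerate if its rows are nonzero and
pairwise non-proportional. -/
def Nondeg {e d : ℕ} (α : Matrix (Fin e) (Fin d) ℝ) : Prop :=
  (∀ i, α i ≠ 0) ∧ ∀ i j : Fin e, i ≠ j → ∀ c : ℝ, α i ≠ c • α j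

/-- The set `Λ_i`: vectors `λ ∈ ℝ^e` supported on some `S` with `|S| ≤ d` which are
the unique solution of `λᵀ α = α_i` with support in `S`. -/
def Lambda {e d : ℕ} (α : Matrix (Fin e) (Fin d) ℝ) (i : Fin e) : Set (Fin e → ℝ) :=
  {l | ∃ S : Finset (Fin e), S.card ≤ d ∧ (∀ k ∉ S, l k = 0) ∧
        (∀ j, ∑ k, l k * α k j = α i j) ∧
        ∀ l' : Fin e → ℝ, (∀ k ∉ S, l' k = 0) → (∀ j, ∑ k, l' k * α k j = α i j) → l' = l}

/-- `e̲_k(a,m)` -/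
noncomputable def eLow {e : ℕ} (a : ℝ) (m : CM e) (k : Fin e) : ℝ :=
  if 0 ≤ a then m.1 k else m.2 k

/-- `ē_k(a,m)` -/
noncomputable def eHigh {e : ℕ} (a : ℝ) (m : CM e) (k : Fin e) : ℝ :=
  if 0 ≤ a then m.2 k else m.1 k

/-- The optimized constraint matrix `O(m)`. -/
noncomputable def Opt {e d : ℕ} (α : Matrix (Fin e) (Fin d) ℝ) (m : CM e) : CM e :=
  (fun i => sSup ((fun l : Fin e → ℝ => ∑ k, l k * eLow (l k) m k) '' Lambda α i),
   fun i => sInf ((fun l : Fin e → ℝ => ∑ k, l k * eHigh (l k) m k) '' Lambda α i))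

/-- Intersection constraint matrix `m ∩ m'`. -/
def interCM {e : ℕ} (m m' : CM e) : CM e :=
  (fun i => max (m.1 i) (m'.1 i), fun i => min (m.2 i) (m'.2 i))

/-- Constraint-matrix inclusion `m ⊂ m'`. -/
def cmSub {e : ℕ} (m m' : CM e) : Prop := ∀ i, m'.1 i ≤ m.1 i ∧ m.2 i ≤ m'.2 i

/-- The map `h`. -/
noncomputable def hfun (u : ℝ) : ℝ :=
  if Int.fract (u + 1/2) = 0 then (0:ℝ) else ((⌊u + 1/2⌋ : ℤ) : ℝ)

/-- The map `G_{ϱ,ε}` (symmetric three-cluster distribution `(ϱ, 1-2ϱ, ϱ)`). -/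
noncomputable def Gmap (ϱ ε : ℝ) (x : Fin 2 → ℝ) : Fin 2 → ℝ := fun i =>
  2*(1-ε)*x i + 2*ε*((1-ϱ)*hfun (x i) + ϱ*(hfun (x 0 + x 1) - hfun (x (1-i)))) - hfun (x i)

/-- The open unit square `(0,1)²`. -/
def cube2 : Set (Fin 2 → ℝ) := {x | ∀ i, 0 < x i ∧ x i < 1}

/-- The atom `A_ω` with label `ω = (h(x₁), h(x₂), h(x₁+x₂))`. -/
noncomputable def Atom2 (ω : ℤ × ℤ × ℤ) : Set (Fin 2 → ℝ) :=
  {x | x ∈ cube2 ∧ hfun (x 0) = (ω.1 : ℝ) ∧ hfun (x 1) = (ω.2.1 : ℝ) ∧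
       hfun (x 0 + x 1) = (ω.2.2 : ℝ)}

/-- The symmetry `σ₃₂₁(x) = (1-x₂, 1-x₁)`. -/
def sigma321 (x : Fin 2 → ℝ) : Fin 2 → ℝ := fun i => 1 - x (1 - i)

/-- The symmetry `Σ(x) = (1-x₁, 1-x₂)`. -/
def SigMap2 (x : Fin 2 → ℝ) : Fin 2 → ℝ := fun i => 1 - x i

/-- Conditioning Problem 1 for a set `P`. -/
noncomputable def SolvesCP1 (ϱ ε : ℝ) (P : Set (Fin 2 → ℝ)) : Prop :=
  P.Nonempty ∧ P ⊆ cube2 ∧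
  (∀ ω : ℤ × ℤ × ℤ, (P ∩ Atom2 ω).Nonempty ↔ ω = (0,0,1) ∨ ω = (0,1,1)) ∧
  Gmap ϱ ε '' (P ∩ Atom2 (0,0,1)) = sigma321 '' P ∧
  Gmap ϱ ε '' (P ∩ Atom2 (0,1,1)) ⊆ P

/-- The coefficient matrix `α_a` with rows `(1,0), (0,1), (a,1), (1,a)`. -/
noncomputable def alphaA (a : ℝ) : Matrix (Fin 4) (Fin 2) ℝ := !![1,0; 0,1; a,1; 1,a]

/-- `r_ϱ = (1-2ϱε)/(3-2ε)`. -/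
noncomputable def rRho (ϱ ε : ℝ) : ℝ := (1 - 2*ϱ*ε)/(3 - 2*ε)

/-- The explicit constraint matrix `m_a`. -/
noncomputable def mMat (ϱ ε a : ℝ) : CM 4 :=
  (![ε*(1-2*ϱ), rRho ϱ ε, ((1+a)/a)*(rRho ϱ ε + (a-1)*ε*(1-2*ϱ)), (1+a)*rRho ϱ ε],
   ![rRho ϱ ε, 1 - 2*ε*(1-ϱ-ε*(1-2*ϱ)), (1+a)*rRho ϱ ε,
     ((1+a)/a)*(a*rRho ϱ ε + 2*(a-1)*(1-ε)^2*(1-2*rRho ϱ ε))])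

/-- The union `U = P^{α_a}_{m_a} ∪ σ₃₂₁(P^{α_a}_{m_a})`. -/
noncomputable def Uset (ϱ ε a : ℝ) : Set (Fin 2 → ℝ) :=
  PolySet (alphaA a) (mMat ϱ ε a) ∪ sigma321 '' PolySet (alphaA a) (mMat ϱ ε a)


lemma hfun_eq_zero {u : ℝ} (h1 : 0 < u) (h2 : u ≤ 1/2) : hfun u = 0 := by
  unfold hfun
  split_ifs with h
  · rfl
  · have hne : u ≠ 1/2 := by
      intro he; apply h; rw [he]; norm_num
    have hlt : u + 1/2 < 1 := by
      rcases lt_or_eq_of_le h2 with h' | h'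
      · linarith
      · exact absurd h' hne
    have hfl : ⌊u + 1/2⌋ = 0 :=
      Int.floor_eq_zero_iff.mpr (by constructor <;> · norm_num; linarith)
    rw [hfl]; simp

lemma hfun_eq_one {u : ℝ} (h1 : 1/2 < u) (h2 : u < 3/2) : hfun u = 1 := by
  have hfl : ⌊u + 1/2⌋ = 1 := by
    rw [show ((1:ℤ)) = ((1:ℕ):ℤ) by norm_num, Int.floor_eq_iff] <;> push_cast <;>
      constructor <;> linarith
  unfold hfun
  have hfr : Int.fract (u + 1/2) ≠ 0 := by
    rw [Int.fract, hfl]; push_cast; intro h; linarith [h]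
  rw [if_neg hfr, hfl]; norm_num

lemma Gmap_apply0 (ϱ ε : ℝ) (x : Fin 2 → ℝ) : Gmap ϱ ε x 0 =
    2*(1-ε)*x 0 + 2*ε*((1-ϱ)*hfun (x 0) + ϱ*(hfun (x 0 + x 1) - hfun (x 1))) - hfun (x 0) := rfl

lemma Gmap_apply1 (ϱ ε : ℝ) (x : Fin 2 → ℝ) : Gmap ϱ ε x 1 =
    2*(1-ε)*x 1 + 2*ε*((1-ϱ)*hfun (x 1) + ϱ*(hfun (x 0 + x 1) - hfun (x 0))) - hfun (x 1) := rfl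

lemma sigma321_apply0 (x : Fin 2 → ℝ) : sigma321 x 0 = 1 - x 1 := rfl
lemma sigma321_apply1 (x : Fin 2 → ℝ) : sigma321 x 1 = 1 - x 0 := rfl

lemma sigma321_invol (x : Fin 2 → ℝ) : sigma321 (sigma321 x) = x := by
  funext i; fin_cases i <;> simp [sigma321]

/-- whenever `P^{α_a}_{m_a}` solves Conditioning Problem 1, the union
`U = P^{α_a}_{m_a} ∪ σ₃₂₁(P^{α_a}_{m_a})` is an AsIUP for `G_{ϱ,ε}`:
`G_{ϱ,ε}(U) ⊆ U` and `Σ(U) ∩ U = ∅`. -/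
theorem statement_11 (ϱ a ε : ℝ) (hϱ : ϱ ∈ Set.Ioo (0:ℝ) (1/2)) (ha : 1 < a)
    (hε : ε ∈ Set.Ioo (0:ℝ) (1/2))
    (hsol : SolvesCP1 ϱ ε (PolySet (alphaA a) (mMat ϱ ε a))) :
    Gmap ϱ ε '' Uset ϱ ε a ⊆ Uset ϱ ε a ∧
    SigMap2 '' Uset ϱ ε a ∩ Uset ϱ ε a = ∅ := by
  obtain ⟨hne, hsub, hatoms, heq, hsubim⟩ := hsol
  obtain ⟨hϱ0, hϱ2⟩ := hϱ
  obtain ⟨hε0, hε2⟩ := hε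
  set P := PolySet (alphaA a) (mMat ϱ ε a) with hPdef
  have hrlt : rRho ϱ ε < 1/2 := by
    rw [rRho, div_lt_iff₀ (by linarith)]
    nlinarith
  have hb : ∀ x ∈ P, ε*(1-2*ϱ) < x 0 ∧ x 0 < rRho ϱ ε ∧ rRho ϱ ε < x 1 := by
    intro x hx
    have h0 := hx 0
    have h1 := hx 1
    simp [alphaA, mMat, Matrix.mulVec, dotProduct, Fin.sum_univ_two] at h0 h1
    exact ⟨by linarith [h0.1], by linarith [h0.2], by linarith [h1.1]⟩
  have hcube : ∀ x ∈ P, (0 < x 0 ∧ x 0 < 1) ∧ (0 < x 1 ∧ x 1 < 1) := by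
    intro x hx; exact ⟨hsub hx 0, hsub hx 1⟩
  have hx0half : ∀ x ∈ P, x 0 < 1/2 := fun x hx => lt_trans (hb x hx).2.1 hrlt
  have hsumgt : ∀ x ∈ P, 1/2 < x 0 + x 1 := by
    intro x hx
    by_contra hle
    push_neg at hle
    have hc := hcube x hx
    have h10 : hfun (x 0) = 0 := hfun_eq_zero hc.1.1 (by linarith [hc.2.1])
    have h11 : hfun (x 1) = 0 := hfun_eq_zero hc.2.1 (by linarith [hc.1.1])
    have h1s : hfun (x 0 + x 1) = 0 :=
      hfun_eq_zero (by linarith [hc.1.1, hc.2.1]) hle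
    have hxA : (P ∩ Atom2 (0,0,0)).Nonempty :=
      ⟨x, hx, hsub hx, by simpa using h10, by simpa using h11, by simpa using h1s⟩
    rcases (hatoms _).mp hxA with h | h <;> exact absurd h (by decide)
  have hsumlt : ∀ x ∈ P, x 0 + x 1 < 3/2 := by
    intro x hx
    have h1 := hx0half x hx
    have h2 := (hcube x hx).2.2
    linarith
  have hfs : ∀ x ∈ P, hfun (x 0 + x 1) = 1 :=
    fun x hx => hfun_eq_one (hsumgt x hx) (hsumlt x hx)
  have hf0 : ∀ x ∈ P, hfun (x 0) = 0 :=
    fun x hx => hfun_eq_zero (hcube x hx).1.1 (le_of_lt (hx0half x hx))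
  have hx1ne : ∀ x ∈ P, x 1 ≠ 1/2 := by
    intro x hx he
    have hA : x ∈ Atom2 (0,0,1) :=
      ⟨hsub hx, by simpa using hf0 x hx,
       by rw [he]; simpa using hfun_eq_zero (by norm_num) (le_refl (1/2 : ℝ)),
       by simpa using hfs x hx⟩
    have hmem : Gmap ϱ ε x ∈ sigma321 '' P := by
      rw [← heq]; exact ⟨x, ⟨hx, hA⟩, rfl⟩
    obtain ⟨p, hp, hpe⟩ := hmem
    have hp0 : 1 - Gmap ϱ ε x 1 = p 0 := by
      have h := congrFun hpe 1
      rw [sigma321_apply1] at h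
      linarith [h]
    have hG1 : Gmap ϱ ε x 1 = (1-ε) + 2*ε*ϱ := by
      rw [Gmap_apply1, hf0 x hx, hfs x hx, he,
        hfun_eq_zero (by norm_num : (0:ℝ) < 1/2) (le_refl (1/2:ℝ))]
      ring
    have hpb := (hb p hp).1
    rw [← hp0, hG1] at hpb
    linarith
  have hGU : ∀ x ∈ P, Gmap ϱ ε x ∈ Uset ϱ ε a := by
    intro x hx
    rcases lt_or_gt_of_ne (hx1ne x hx) with h | h
    · have hA : x ∈ Atom2 (0,0,1) :=
        ⟨hsub hx, by simpa using hf0 x hx,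
         by simpa using hfun_eq_zero (hcube x hx).2.1 h.le,
         by simpa using hfs x hx⟩
      right
      rw [← heq]
      exact ⟨x, ⟨hx, hA⟩, rfl⟩
    · have hA : x ∈ Atom2 (0,1,1) :=
        ⟨hsub hx, by simpa using hf0 x hx,
         by simpa using hfun_eq_one h (by linarith [(hcube x hx).2.2]),
         by simpa using hfs x hx⟩
      left
      exact hsubim ⟨x, ⟨hx, hA⟩, rfl⟩
  have hequiv : ∀ x ∈ P, Gmap ϱ ε (sigma321 x) = sigma321 (Gmap ϱ ε x) := by
    intro x hx
    have hc := hcube x hx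
    have h0 := hf0 x hx
    have hs := hfs x hx
    have hgt := hsumgt x hx
    have hlt := hsumlt x hx
    have hxh := hx0half x hx
    have hfσ1 : hfun (1 - x 0) = 1 :=
      hfun_eq_one (by linarith) (by linarith [hc.1.1])
    have hfσs : hfun ((1 - x 1) + (1 - x 0)) = 1 := by
      rw [show (1 - x 1) + (1 - x 0) = 2 - (x 0 + x 1) by ring]
      exact hfun_eq_one (by linarith) (by linarith)
    rcases lt_or_gt_of_ne (hx1ne x hx) with h | h
    · have hf1 : hfun (x 1) = 0 := hfun_eq_zero hc.2.1 h.le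
      have hfσ0 : hfun (1 - x 1) = 1 :=
        hfun_eq_one (by linarith) (by linarith [hc.2.1])
      funext i; fin_cases i
      · show Gmap ϱ ε (sigma321 x) 0 = sigma321 (Gmap ϱ ε x) 0
        simp only [Gmap_apply0, Gmap_apply1, sigma321_apply0, sigma321_apply1]
        rw [hfσ0, hfσ1, hfσs, hf1, hs, h0]
        ring
      · show Gmap ϱ ε (sigma321 x) 1 = sigma321 (Gmap ϱ ε x) 1
        simp only [Gmap_apply0, Gmap_apply1, sigma321_apply0, sigma321_apply1]
        rw [hfσ0, hfσ1, hfσs, hf1, hs, h0]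
        ring
    · have hf1 : hfun (x 1) = 1 := hfun_eq_one h (by linarith [hc.2.2])
      have hfσ0 : hfun (1 - x 1) = 0 :=
        hfun_eq_zero (by linarith [hc.2.2]) (by linarith)
      funext i; fin_cases i
      · show Gmap ϱ ε (sigma321 x) 0 = sigma321 (Gmap ϱ ε x) 0
        simp only [Gmap_apply0, Gmap_apply1, sigma321_apply0, sigma321_apply1]
        rw [hfσ0, hfσ1, hfσs, hf1, hs, h0]
        ring
      · show Gmap ϱ ε (sigma321 x) 1 = sigma321 (Gmap ϱ ε x) 1
        simp only [Gmap_apply0, Gmap_apply1, sigma321_apply0, sigma321_apply1]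
        rw [hfσ0, hfσ1, hfσs, hf1, hs, h0]
        ring
  have hUlt : ∀ z ∈ Uset ϱ ε a, z 0 < z 1 := by
    rintro z (hz | ⟨x, hx, rfl⟩)
    · have h := hb z hz; linarith [h.2.1, h.2.2]
    · have h := hb x hx
      rw [sigma321_apply0, sigma321_apply1]
      linarith [h.2.1, h.2.2]
  constructor
  · rintro _ ⟨z, hz, rfl⟩
    rcases hz with hzP | ⟨x, hx, rfl⟩
    · exact hGU z hzP
    · rw [hequiv x hx]
      rcases hGU x hx with hg | ⟨q, hq, hqe⟩
      · exact Or.inr ⟨_, hg, rfl⟩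
      · rw [← hqe, sigma321_invol]
        exact Or.inl hq
  · ext z
    simp only [mem_inter_iff, mem_image, mem_empty_iff_false, iff_false, not_and]
    rintro ⟨w, hw, rfl⟩ hz
    have h1 := hUlt w hw
    have h2 := hUlt _ hz
    simp only [SigMap2] at h2
    linarith
end

section
/- Let ϱ ∈ (0,1/2), ε ∈ (0,1/2), a ≥ 1, and let m be a constraint matrix for α_a with m = O(m) such that the polytope P^{α_a}_m is contained in (0,1)² and satisfies the localisation condition of Conditioning Problem 1, i.e., P^{α_a}_m ∩ A_ω ≠ ∅ iff ω ∈ {001, 011}. Then 0 ≤ m̲₁, m̄₁ ≤ 1/2, m̲₂ ≤ 1/2 ≤ m̄₂ ≤ 1, and 1/2 ≤ m̲₃ and 1/2 ≤ m̲₄. -/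
open Set

section Helpers

lemma hfun_one {s : ℝ} (h : hfun s = 1) : 1/2 < s ∧ s < 3/2 := by
  unfold hfun at h
  split_ifs at h with hf
  · norm_num at h
  · have hz : ⌊s + 1/2⌋ = 1 := by exact_mod_cast h
    have h1 := Int.floor_le (s + 1/2)
    have h2 := Int.lt_floor_add_one (s + 1/2)
    rw [hz] at h1 h2
    push_cast at h1 h2
    have hne : s ≠ 1/2 := by
      intro he
      apply hf
      rw [he]
      norm_num
    constructor
    · rcases lt_or_eq_of_le (by linarith : (1:ℝ)/2 ≤ s) with h | h
      · exact h
      · exact absurd h.symm hne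
    · linarith

lemma hfun_zero {u : ℝ} (h : hfun u = 0) (h0 : 0 < u) (h1 : u < 1) : u ≤ 1/2 := by
  unfold hfun at h
  split_ifs at h with hf
  · rw [Int.fract] at hf
    have key : u + 1/2 = (⌊u + 1/2⌋ : ℝ) := by linarith
    have hfl : ⌊u + 1/2⌋ = 1 := by
      have b1 : (0:ℝ) < (⌊u + 1/2⌋ : ℝ) := by linarith
      have b2 : ((⌊u + 1/2⌋ : ℝ)) < 2 := by linarith
      have c1 : (0:ℤ) < ⌊u + 1/2⌋ := by exact_mod_cast b1
      have c2 : ⌊u + 1/2⌋ < 2 := by exact_mod_cast b2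
      omega
    rw [hfl] at key
    norm_num at key
    linarith
  · have hz : ⌊u + 1/2⌋ = 0 := by exact_mod_cast h
    have h2 := Int.lt_floor_add_one (u + 1/2)
    rw [hz] at h2
    push_cast at h2
    linarith

lemma exists_label (x : Fin 2 → ℝ) (hx : x ∈ cube2) : ∃ ω : ℤ × ℤ × ℤ, x ∈ Atom2 ω := by
  have key : ∀ u : ℝ, ∃ n : ℤ, hfun u = (n : ℝ) := by
    intro u
    unfold hfun
    split_ifs with h
    · exact ⟨0, by norm_num⟩
    · exact ⟨⌊u + 1/2⌋, rfl⟩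
  obtain ⟨n1, h1⟩ := key (x 0)
  obtain ⟨n2, h2⟩ := key (x 1)
  obtain ⟨n3, h3⟩ := key (x 0 + x 1)
  exact ⟨(n1, n2, n3), hx, h1, h2, h3⟩

end Helpers

section LambdaMach

lemma lambda_finite {e d : ℕ} (α : Matrix (Fin e) (Fin d) ℝ) (i : Fin e) :
    (Lambda α i).Finite := by
  have hsub : Lambda α i ⊆ ⋃ S : Finset (Fin e),
      {l : Fin e → ℝ | (∀ k ∉ S, l k = 0) ∧ (∀ j, ∑ k, l k * α k j = α i j) ∧
        ∀ l' : Fin e → ℝ, (∀ k ∉ S, l' k = 0) → (∀ j, ∑ k, l' k * α k j = α i j) → l' = l} := by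
    rintro l ⟨S, -, h1, h2, h3⟩
    exact Set.mem_iUnion.2 ⟨S, h1, h2, h3⟩
  refine Set.Finite.subset (Set.finite_iUnion fun S => Set.Subsingleton.finite ?_) hsub
  rintro l ⟨h1, h2, h3⟩ l' ⟨h1', h2', h3'⟩
  exact h3' l h1 h2

lemma sum_pair_support {e : ℕ} {j k : Fin e} (hjk : j ≠ k) (f : Fin e → ℝ)
    (hf : ∀ t ∉ ({j, k} : Finset (Fin e)), f t = 0) :
    ∑ t, f t = f j + f k := by
  rw [← Finset.sum_subset (Finset.subset_univ {j, k}) (fun t _ ht => hf t ht)]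
  exact Finset.sum_pair hjk

lemma pair_mem_lambda {e : ℕ} (α : Matrix (Fin e) (Fin 2) ℝ) (i j k : Fin e) (hjk : j ≠ k)
    (cj ck : ℝ)
    (h0 : cj * α j 0 + ck * α k 0 = α i 0)
    (h1 : cj * α j 1 + ck * α k 1 = α i 1)
    (hdet : α j 0 * α k 1 - α j 1 * α k 0 ≠ 0) :
    (fun t => if t = j then cj else if t = k then ck else 0) ∈ Lambda α i := by
  have hkj : k ≠ j := hjk.symm
  refine ⟨{j, k}, ?_, ?_, ?_, ?_⟩
  · exact (Finset.card_insert_le _ _).trans (by simp)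
  · intro t ht
    simp only [Finset.mem_insert, Finset.mem_singleton, not_or] at ht
    simp [ht.1, ht.2]
  · intro j'
    rw [sum_pair_support hjk _ (fun t ht => ?_)]
    · simp only [if_pos rfl, if_neg hkj]
      fin_cases j'
      · exact h0
      · exact h1
    · simp only [Finset.mem_insert, Finset.mem_singleton, not_or] at ht
      simp [ht.1, ht.2]
  · intro l' hz heq
    have e0 : l' j * α j 0 + l' k * α k 0 = α i 0 := by
      rw [← sum_pair_support hjk (fun t => l' t * α t 0) (fun t ht => by simp [hz t ht])]
      exact heq 0
    have e1 : l' j * α j 1 + l' k * α k 1 = α i 1 := by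
      rw [← sum_pair_support hjk (fun t => l' t * α t 1) (fun t ht => by simp [hz t ht])]
      exact heq 1
    have keyj : (l' j - cj) * (α j 0 * α k 1 - α j 1 * α k 0) = 0 := by
      linear_combination α k 1 * e0 - α k 0 * e1 - α k 1 * h0 + α k 0 * h1
    have keyk : (l' k - ck) * (α j 0 * α k 1 - α j 1 * α k 0) = 0 := by
      linear_combination -α j 1 * e0 + α j 0 * e1 + α j 1 * h0 - α j 0 * h1
    have hj : l' j = cj := sub_eq_zero.mp ((mul_eq_zero.mp keyj).resolve_right hdet)
    have hk : l' k = ck := sub_eq_zero.mp ((mul_eq_zero.mp keyk).resolve_right hdet)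
    funext t
    by_cases h1t : t = j
    · subst h1t; simp [hj]
    · by_cases h2t : t = k
      · subst h2t; simp [hkj, hk]
      · simp only [if_neg h1t, if_neg h2t]
        exact hz t (by simp [h1t, h2t])

lemma val_pair {e : ℕ} (F : ℝ → Fin e → ℝ) {j k : Fin e} (hjk : j ≠ k) (cj ck : ℝ) :
    ∑ t, (if t = j then cj else if t = k then ck else 0) *
        F (if t = j then cj else if t = k then ck else 0) t
      = cj * F cj j + ck * F ck k := by
  have hkj : k ≠ j := hjk.symm
  rw [sum_pair_support hjk _ (fun t ht => ?_)]
  · simp [if_pos rfl, if_neg hkj]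
  · simp only [Finset.mem_insert, Finset.mem_singleton, not_or] at ht
    simp [ht.1, ht.2]

lemma dual_low {a : ℝ} {m : CM 4} (hopt : m = Opt (alphaA a) m)
    (i j k : Fin 4) (hjk : j ≠ k) (cj ck : ℝ)
    (h0 : cj * alphaA a j 0 + ck * alphaA a k 0 = alphaA a i 0)
    (h1 : cj * alphaA a j 1 + ck * alphaA a k 1 = alphaA a i 1)
    (hdet : alphaA a j 0 * alphaA a k 1 - alphaA a j 1 * alphaA a k 0 ≠ 0) :
    cj * eLow cj m j + ck * eLow ck m k ≤ m.1 i := by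
  have hmem := pair_mem_lambda (alphaA a) i j k hjk cj ck h0 h1 hdet
  have hfin : ((fun l : Fin 4 → ℝ => ∑ t, l t * eLow (l t) m t) '' Lambda (alphaA a) i).Finite :=
    (lambda_finite _ i).image _
  have hle := le_csSup hfin.bddAbove (Set.mem_image_of_mem _ hmem)
  rw [val_pair (fun c t => eLow c m t) hjk cj ck] at hle
  have hfst : m.1 = (Opt (alphaA a) m).1 := congrArg Prod.fst hopt
  rw [hfst]
  exact hle

lemma dual_high {a : ℝ} {m : CM 4} (hopt : m = Opt (alphaA a) m)
    (i j k : Fin 4) (hjk : j ≠ k) (cj ck : ℝ)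
    (h0 : cj * alphaA a j 0 + ck * alphaA a k 0 = alphaA a i 0)
    (h1 : cj * alphaA a j 1 + ck * alphaA a k 1 = alphaA a i 1)
    (hdet : alphaA a j 0 * alphaA a k 1 - alphaA a j 1 * alphaA a k 0 ≠ 0) :
    m.2 i ≤ cj * eHigh cj m j + ck * eHigh ck m k := by
  have hmem := pair_mem_lambda (alphaA a) i j k hjk cj ck h0 h1 hdet
  have hfin : ((fun l : Fin 4 → ℝ => ∑ t, l t * eHigh (l t) m t) '' Lambda (alphaA a) i).Finite :=
    (lambda_finite _ i).image _
  have hle := csInf_le hfin.bddBelow (Set.mem_image_of_mem _ hmem)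
  rw [val_pair (fun c t => eHigh c m t) hjk cj ck] at hle
  have hsnd : m.2 = (Opt (alphaA a) m).2 := congrArg Prod.snd hopt
  rw [hsnd]
  exact hle

end LambdaMach

section FM

lemma FM1 (L0 U0 L1 U1 L2 U2 : ℝ) (h1 : L0 < U0) (h2 : L1 < U1) (h3 : L2 < U2)
    (h4 : L0 + L1 < U2) (h5 : L2 < U0 + U1) :
    ∃ x y : ℝ, L0 < x ∧ x < U0 ∧ L1 < y ∧ y < U1 ∧ L2 < x + y ∧ x + y < U2 := by
  have hm1 := le_max_left L1 (L2 - U0)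
  have hm2 := le_max_right L1 (L2 - U0)
  have hn1 := min_le_left U1 (U2 - L0)
  have hn2 := min_le_right U1 (U2 - L0)
  have hA : max L1 (L2 - U0) < min U1 (U2 - L0) := by
    rw [max_lt_iff, lt_min_iff, lt_min_iff]
    exact ⟨⟨h2, by linarith⟩, ⟨by linarith, by linarith⟩⟩
  set y := (max L1 (L2 - U0) + min U1 (U2 - L0)) / 2 with hy
  have hy1 : max L1 (L2 - U0) < y := by rw [hy]; linarith
  have hy2 : y < min U1 (U2 - L0) := by rw [hy]; linarith
  have hm1' := le_max_left L0 (L2 - y)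
  have hm2' := le_max_right L0 (L2 - y)
  have hn1' := min_le_left U0 (U2 - y)
  have hn2' := min_le_right U0 (U2 - y)
  have hB : max L0 (L2 - y) < min U0 (U2 - y) := by
    rw [max_lt_iff, lt_min_iff, lt_min_iff]
    exact ⟨⟨h1, by linarith⟩, ⟨by linarith, by linarith⟩⟩
  set x := (max L0 (L2 - y) + min U0 (U2 - y)) / 2 with hx
  have hx1 : max L0 (L2 - y) < x := by rw [hx]; linarith
  have hx2 : x < min U0 (U2 - y) := by rw [hx]; linarith
  exact ⟨x, y, by linarith, by linarith, by linarith, by linarith, by linarith, by linarith⟩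

set_option maxHeartbeats 1000000 in
lemma FM2 (a L0 U0 L1 U1 L2 U2 L3 U3 : ℝ) (ha : 1 < a)
    (g1 : L0 < U0) (g5 : L2 < U2) (g9 : L3 < U3)
    (h11 : L1 < U1)
    (h12 : L1 + a*L0 < U2)
    (h13 : a*L1 + L0 < U3)
    (h14 : (a^2-1)*L1 + L2 < a*U3)
    (h21 : L2 < a*U0 + U1)
    (h22 : L2 + a*L0 < U2 + a*U0)
    (h23 : a*L2 + L0 < U3 + a^2*U0)
    (h24 : a*L2 < U3 + (a^2-1)*U0)
    (h31 : L3 < U0 + a*U1)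
    (h32 : L3 + a^2*L0 < a*U2 + U0)
    (h33 : L3 + L0 < U3 + U0)
    (h34 : (a^2-1)*L3 + a*L2 < a^2*U3 + (a^2-1)*U0)
    (h41 : a*L3 < U2 + (a^2-1)*U1)
    (h42 : L3 + (a^2-1)*L0 < a*U2)
    (h43 : a^2*L3 + (a^2-1)*L0 < a*U2 + (a^2-1)*U3)
    (h44 : a*L3 + L2 < a*U3 + U2) :
    ∃ x y : ℝ, L0 < x ∧ x < U0 ∧ L1 < y ∧ y < U1 ∧
      L2 < a*x + y ∧ a*x + y < U2 ∧ L3 < x + a*y ∧ x + a*y < U3 := by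
  have ha0 : (0:ℝ) < a := by linarith
  have ha2 : (0:ℝ) < a^2 - 1 := by nlinarith
  set W := max (max L1 (L2 - a*U0)) (max ((L3-U0)/a) ((a*L3-U2)/(a^2-1))) with hW
  set V := min (min U1 (U2 - a*L0)) (min ((U3-L0)/a) ((a*U3-L2)/(a^2-1))) with hV
  have hWV : W < V := by
    rw [hW, hV]
    refine max_lt (max_lt ?_ ?_) (max_lt ?_ ?_) <;>
      refine lt_min (lt_min ?_ ?_) (lt_min ?_ ?_)
    · exact h11
    · linarith
    · rw [lt_div_iff₀ ha0]; linarith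
    · rw [lt_div_iff₀ ha2]; linarith
    · linarith
    · linarith
    · rw [lt_div_iff₀ ha0]; linarith
    · rw [lt_div_iff₀ ha2]; linarith [mul_lt_mul_of_pos_left h24 ha0]
    · rw [div_lt_iff₀ ha0]; linarith
    · rw [div_lt_iff₀ ha0]; linarith [h32]
    · rw [div_lt_div_iff₀ ha0 ha0]; linarith [mul_lt_mul_of_pos_left h33 ha0]
    · rw [div_lt_div_iff₀ ha0 ha2]; linarith [h34]
    · rw [div_lt_iff₀ ha2]; linarith [h41]
    · rw [div_lt_iff₀ ha2]; linarith [mul_lt_mul_of_pos_left h42 ha0]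
    · rw [div_lt_div_iff₀ ha2 ha0]; linarith [h43]
    · rw [div_lt_div_iff₀ ha2 ha2]; linarith [mul_lt_mul_of_pos_left h44 ha2]
  set y := (W + V) / 2 with hy
  have hy1 : W < y := by rw [hy]; linarith
  have hy2 : y < V := by rw [hy]; linarith
  have hyL1 : L1 < y := lt_of_le_of_lt (le_trans (le_max_left _ _) (le_max_left _ _)) hy1
  have hyW2 : L2 - a*U0 < y := lt_of_le_of_lt (le_trans (le_max_right _ _) (le_max_left _ _)) hy1
  have hyW3 : (L3-U0)/a < y := lt_of_le_of_lt (le_trans (le_max_left _ _) (le_max_right _ _)) hy1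
  have hyW4 : (a*L3-U2)/(a^2-1) < y :=
    lt_of_le_of_lt (le_trans (le_max_right _ _) (le_max_right _ _)) hy1
  have hyU1 : y < U1 := lt_of_lt_of_le hy2 (le_trans (min_le_left _ _) (min_le_left _ _))
  have hyV2 : y < U2 - a*L0 := lt_of_lt_of_le hy2 (le_trans (min_le_left _ _) (min_le_right _ _))
  have hyV3 : y < (U3-L0)/a := lt_of_lt_of_le hy2 (le_trans (min_le_right _ _) (min_le_left _ _))
  have hyV4 : y < (a*U3-L2)/(a^2-1) :=
    lt_of_lt_of_le hy2 (le_trans (min_le_right _ _) (min_le_right _ _))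
  -- clear divisions
  have hyW3' : L3 - U0 < a*y := by rw [div_lt_iff₀ ha0] at hyW3; linarith
  have hyW4' : a*L3 - U2 < (a^2-1)*y := by rw [div_lt_iff₀ ha2] at hyW4; linarith
  have hyV3' : a*y < U3 - L0 := by rw [lt_div_iff₀ ha0] at hyV3; linarith
  have hyV4' : (a^2-1)*y < a*U3 - L2 := by rw [lt_div_iff₀ ha2] at hyV4; linarith
  set W' := max (max L0 ((L2-y)/a)) (L3 - a*y) with hW'
  set V' := min (min U0 ((U2-y)/a)) (U3 - a*y) with hV'
  have hWV' : W' < V' := by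
    rw [hW', hV']
    refine max_lt (max_lt ?_ ?_) ?_ <;> refine lt_min (lt_min ?_ ?_) ?_
    · exact g1
    · rw [lt_div_iff₀ ha0]; linarith
    · linarith
    · rw [div_lt_iff₀ ha0]; linarith
    · rw [div_lt_div_iff₀ ha0 ha0]; linarith [mul_lt_mul_of_pos_left g5 ha0]
    · rw [div_lt_iff₀ ha0]; linarith [hyV4']
    · linarith
    · rw [lt_div_iff₀ ha0]; linarith [hyW4']
    · linarith
  set x := (W' + V') / 2 with hx
  have hx1 : W' < x := by rw [hx]; linarith
  have hx2 : x < V' := by rw [hx]; linarith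
  have hxL0 : L0 < x := lt_of_le_of_lt (le_trans (le_max_left _ _) (le_max_left _ _)) hx1
  have hxW2 : (L2-y)/a < x := lt_of_le_of_lt (le_trans (le_max_right _ _) (le_max_left _ _)) hx1
  have hxW3 : L3 - a*y < x := lt_of_le_of_lt (le_max_right _ _) hx1
  have hxU0 : x < U0 := lt_of_lt_of_le hx2 (le_trans (min_le_left _ _) (min_le_left _ _))
  have hxV2 : x < (U2-y)/a := lt_of_lt_of_le hx2 (le_trans (min_le_left _ _) (min_le_right _ _))
  have hxV3 : x < U3 - a*y := lt_of_lt_of_le hx2 (min_le_right _ _)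
  have hxW2' : L2 - y < a*x := by rw [div_lt_iff₀ ha0] at hxW2; linarith
  have hxV2' : a*x < U2 - y := by rw [lt_div_iff₀ ha0] at hxV2; linarith
  exact ⟨x, y, hxL0, hxU0, hyL1, hyU1, by linarith, by linarith, by linarith, by linarith⟩

end FM

section Mats

lemma alphaA_mulVec (a : ℝ) (x : Fin 2 → ℝ) :
    (alphaA a).mulVec x = ![x 0, x 1, a * x 0 + x 1, x 0 + a * x 1] := by
  funext i
  fin_cases i <;>
    simp [alphaA, Matrix.mulVec, dotProduct, Fin.sum_univ_two] <;> ring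

lemma mem_polySet_iff (a : ℝ) (m : CM 4) (x : Fin 2 → ℝ) :
    x ∈ PolySet (alphaA a) m ↔
      (m.1 0 < x 0 ∧ x 0 < m.2 0) ∧ (m.1 1 < x 1 ∧ x 1 < m.2 1) ∧
      (m.1 2 < a * x 0 + x 1 ∧ a * x 0 + x 1 < m.2 2) ∧
      (m.1 3 < x 0 + a * x 1 ∧ x 0 + a * x 1 < m.2 3) := by
  simp only [PolySet, Set.mem_setOf_eq, alphaA_mulVec]
  constructor
  · intro h
    have h0 := h 0; have h1 := h 1; have h2 := h 2; have h3 := h 3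
    simp only [Matrix.cons_val_zero, Matrix.cons_val_one, Matrix.head_cons] at h0 h1
    simp only [show ((2:Fin 4)) = (⟨2, by norm_num⟩ : Fin 4) from rfl] at h2
    simp only [show ((3:Fin 4)) = (⟨3, by norm_num⟩ : Fin 4) from rfl] at h3
    refine ⟨h0, h1, ?_, ?_⟩
    · simpa using h2
    · simpa using h3
  · rintro ⟨h0, h1, h2, h3⟩ i
    fin_cases i <;> simp [h0, h1, h2, h3]

end Mats

set_option maxHeartbeats 4000000 in
/-- basic bounds on the entries of an optimized constraint matrix whose
polytope lies in `(0,1)²` and satisfies the localisation condition of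
Conditioning Problem 1. -/
theorem statement_12 (ϱ ε a : ℝ) (hϱ : ϱ ∈ Set.Ioo (0:ℝ) (1/2))
    (hε : ε ∈ Set.Ioo (0:ℝ) (1/2)) (ha : 1 ≤ a)
    (m : CM 4) (hopt : m = Opt (alphaA a) m)
    (hsub : PolySet (alphaA a) m ⊆ cube2)
    (hloc : ∀ ω : ℤ × ℤ × ℤ,
      (PolySet (alphaA a) m ∩ Atom2 ω).Nonempty ↔ ω = (0,0,1) ∨ ω = (0,1,1)) :
    0 ≤ m.1 0 ∧ m.2 0 ≤ 1/2 ∧ m.1 1 ≤ 1/2 ∧ (1/2 ≤ m.2 1 ∧ m.2 1 ≤ 1) ∧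
    1/2 ≤ m.1 2 ∧ 1/2 ≤ m.1 3 := by
  have ha0 : (0:ℝ) < a := lt_of_lt_of_le one_pos ha
  have ha0' : a ≠ 0 := ne_of_gt ha0
  have hia : (0:ℝ) < 1/a := by positivity
  -- universal facts
  have huniv : ∀ x ∈ PolySet (alphaA a) m,
      x 0 ≤ 1/2 ∧ 1/2 < x 0 + x 1 ∧ x 0 + x 1 < 3/2 := by
    intro x hx
    have hxc := hsub hx
    obtain ⟨ω, hωA⟩ := exists_label x hxc
    have hω := (hloc ω).1 ⟨x, hx, hωA⟩
    obtain ⟨-, hx1, hx2, hx3⟩ := hωA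
    have hc0 := hxc 0
    rcases hω with h | h <;> subst h <;> norm_num at hx1 hx2 hx3 <;>
      exact ⟨hfun_zero hx1 hc0.1 hc0.2, (hfun_one hx3).1, (hfun_one hx3).2⟩
  -- the two points
  obtain ⟨p, hpP, hpA⟩ := (hloc (0,0,1)).2 (Or.inl rfl)
  obtain ⟨q, hqP, hqA⟩ := (hloc (0,1,1)).2 (Or.inr rfl)
  obtain ⟨hpc, hp1, hp2, hp3⟩ := hpA
  obtain ⟨hqc, hq1, hq2, hq3⟩ := hqA
  norm_num at hp1 hp2 hp3 hq1 hq2 hq3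
  have hpc0 := hpc 0; have hpc1 := hpc 1
  have hqc0 := hqc 0; have hqc1 := hqc 1
  have hp2' : p 1 ≤ 1/2 := hfun_zero hp2 hpc1.1 hpc1.2
  have hq2' : 1/2 < q 1 := (hfun_one hq2).1
  have hpu := huniv p hpP
  have hP := (mem_polySet_iff a m p).1 hpP
  have hQ := (mem_polySet_iff a m q).1 hqP
  obtain ⟨⟨hP0, hP0'⟩, ⟨hP1, hP1'⟩, ⟨hP2, hP2'⟩, ⟨hP3, hP3'⟩⟩ := hP
  obtain ⟨⟨hQ0, hQ0'⟩, ⟨hQ1, hQ1'⟩, ⟨hQ2, hQ2'⟩, ⟨hQ3, hQ3'⟩⟩ := hQ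
  -- easy goals
  have goal3 : m.1 1 ≤ 1/2 := le_of_lt (lt_of_lt_of_le hP1 hp2')
  have goal4a : 1/2 ≤ m.2 1 := le_of_lt (lt_trans hq2' hQ1')
  -- eLow / eHigh evaluation
  have eL : ∀ c : ℝ, 0 ≤ c → ∀ k : Fin 4, eLow c m k = m.1 k := fun c hc k => if_pos hc
  have eL' : ∀ c : ℝ, c < 0 → ∀ k : Fin 4, eLow c m k = m.2 k :=
    fun c hc k => if_neg (not_le.mpr hc)
  have eH : ∀ c : ℝ, 0 ≤ c → ∀ k : Fin 4, eHigh c m k = m.2 k := fun c hc k => if_pos hc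
  have eH' : ∀ c : ℝ, c < 0 → ∀ k : Fin 4, eHigh c m k = m.1 k :=
    fun c hc k => if_neg (not_le.mpr hc)
  have hsq : (0:ℝ) ≤ a^2 - 1 := by
    have h := mul_nonneg (sub_nonneg.mpr ha) (by linarith : (0:ℝ) ≤ a+1)
    linarith [h]
  -- dual inequalities (valid for all a ≥ 1)
  have A1 : m.1 2 - m.2 1 ≤ a * m.1 0 := by
    have h := dual_low hopt 0 1 2 (by decide) (-(1/a)) (1/a)
      (by norm_num [alphaA, Matrix.vecHead, Matrix.vecTail, Matrix.cons_val_two, Matrix.cons_val_three] <;> field_simp) (by norm_num [alphaA, Matrix.vecHead, Matrix.vecTail, Matrix.cons_val_two, Matrix.cons_val_three]) (by norm_num [alphaA, Matrix.vecHead, Matrix.vecTail, Matrix.cons_val_two, Matrix.cons_val_three] <;> positivity)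
    rw [eL' _ (by linarith), eL _ hia.le] at h
    have h2 : a * (-(1/a) * m.2 1 + 1/a * m.1 2) = m.1 2 - m.2 1 := by field_simp <;> ring_nf
    linarith [mul_le_mul_of_nonneg_left h ha0.le]
  have A2 : m.1 3 - a * m.2 1 ≤ m.1 0 := by
    have h := dual_low hopt 0 1 3 (by decide) (-a) 1
      (by norm_num [alphaA, Matrix.vecHead, Matrix.vecTail, Matrix.cons_val_two, Matrix.cons_val_three]) (by norm_num [alphaA, Matrix.vecHead, Matrix.vecTail, Matrix.cons_val_two, Matrix.cons_val_three]) (by norm_num [alphaA, Matrix.vecHead, Matrix.vecTail, Matrix.cons_val_two, Matrix.cons_val_three])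
    rw [eL' _ (by linarith), eL _ (by norm_num)] at h
    linarith
  have D1 : a * m.2 0 ≤ m.2 2 - m.1 1 := by
    have h := dual_high hopt 0 1 2 (by decide) (-(1/a)) (1/a)
      (by norm_num [alphaA, Matrix.vecHead, Matrix.vecTail, Matrix.cons_val_two, Matrix.cons_val_three] <;> field_simp) (by norm_num [alphaA, Matrix.vecHead, Matrix.vecTail, Matrix.cons_val_two, Matrix.cons_val_three]) (by norm_num [alphaA, Matrix.vecHead, Matrix.vecTail, Matrix.cons_val_two, Matrix.cons_val_three] <;> positivity)
    rw [eH' _ (by linarith), eH _ hia.le] at h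
    have h2 : a * (-(1/a) * m.1 1 + 1/a * m.2 2) = m.2 2 - m.1 1 := by field_simp <;> ring_nf
    linarith [mul_le_mul_of_nonneg_left h ha0.le]
  have D2 : m.2 0 ≤ m.2 3 - a * m.1 1 := by
    have h := dual_high hopt 0 1 3 (by decide) (-a) 1
      (by norm_num [alphaA, Matrix.vecHead, Matrix.vecTail, Matrix.cons_val_two, Matrix.cons_val_three]) (by norm_num [alphaA, Matrix.vecHead, Matrix.vecTail, Matrix.cons_val_two, Matrix.cons_val_three]) (by norm_num [alphaA, Matrix.vecHead, Matrix.vecTail, Matrix.cons_val_two, Matrix.cons_val_three])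
    rw [eH' _ (by linarith), eH _ (by norm_num)] at h
    linarith
  have G1 : m.2 1 ≤ m.2 2 - a * m.1 0 := by
    have h := dual_high hopt 1 0 2 (by decide) (-a) 1
      (by norm_num [alphaA, Matrix.vecHead, Matrix.vecTail, Matrix.cons_val_two, Matrix.cons_val_three]) (by norm_num [alphaA, Matrix.vecHead, Matrix.vecTail, Matrix.cons_val_two, Matrix.cons_val_three]) (by norm_num [alphaA, Matrix.vecHead, Matrix.vecTail, Matrix.cons_val_two, Matrix.cons_val_three])
    rw [eH' _ (by linarith), eH _ (by norm_num)] at h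
    linarith
  have G2 : a * m.2 1 ≤ m.2 3 - m.1 0 := by
    have h := dual_high hopt 1 0 3 (by decide) (-(1/a)) (1/a)
      (by norm_num [alphaA, Matrix.vecHead, Matrix.vecTail, Matrix.cons_val_two, Matrix.cons_val_three] <;> field_simp) (by norm_num [alphaA, Matrix.vecHead, Matrix.vecTail, Matrix.cons_val_two, Matrix.cons_val_three] <;> field_simp)
      (by norm_num [alphaA, Matrix.vecHead, Matrix.vecTail, Matrix.cons_val_two, Matrix.cons_val_three] <;> positivity)
    rw [eH' _ (by linarith), eH _ hia.le] at h
    have h2 : a * (-(1/a) * m.1 0 + 1/a * m.2 3) = m.2 3 - m.1 0 := by field_simp <;> ring_nf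
    linarith [mul_le_mul_of_nonneg_left h ha0.le]
  have E1 : a * m.1 0 + m.1 1 ≤ m.1 2 := by
    have h := dual_low hopt 2 0 1 (by decide) a 1
      (by norm_num [alphaA, Matrix.vecHead, Matrix.vecTail, Matrix.cons_val_two, Matrix.cons_val_three]) (by norm_num [alphaA, Matrix.vecHead, Matrix.vecTail, Matrix.cons_val_two, Matrix.cons_val_three]) (by norm_num [alphaA, Matrix.vecHead, Matrix.vecTail, Matrix.cons_val_two, Matrix.cons_val_three])
    rw [eL _ ha0.le, eL _ (by norm_num)] at h
    linarith
  have E2 : (a^2-1) * m.1 0 + m.1 3 ≤ a * m.1 2 := by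
    have h := dual_low hopt 2 0 3 (by decide) ((a^2-1)/a) (1/a)
      (by norm_num [alphaA, Matrix.vecHead, Matrix.vecTail, Matrix.cons_val_two, Matrix.cons_val_three] <;> field_simp <;> ring_nf) (by norm_num [alphaA, Matrix.vecHead, Matrix.vecTail, Matrix.cons_val_two, Matrix.cons_val_three] <;> field_simp)
      (by norm_num [alphaA, Matrix.vecHead, Matrix.vecTail, Matrix.cons_val_two, Matrix.cons_val_three] <;> positivity)
    rw [eL _ (div_nonneg hsq ha0.le), eL _ hia.le] at h
    have h2 : a * ((a^2-1)/a * m.1 0 + 1/a * m.1 3) = (a^2-1) * m.1 0 + m.1 3 := by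
      field_simp <;> ring_nf
    linarith [mul_le_mul_of_nonneg_left h ha0.le]
  have E3 : (1-a^2) * m.2 1 + a * m.1 3 ≤ m.1 2 := by
    have h := dual_low hopt 2 1 3 (by decide) (1-a^2) a
      (by norm_num [alphaA, Matrix.vecHead, Matrix.vecTail, Matrix.cons_val_two, Matrix.cons_val_three]) (by norm_num [alphaA, Matrix.vecHead, Matrix.vecTail, Matrix.cons_val_two, Matrix.cons_val_three] <;> ring) (by norm_num [alphaA, Matrix.vecHead, Matrix.vecTail, Matrix.cons_val_two, Matrix.cons_val_three])
    rw [eL _ ha0.le] at h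
    rcases eq_or_lt_of_le hsq with h1a | h1a
    · have hz : 1 - a^2 = 0 := by linarith
      rw [hz] at h ⊢
      simpa using h
    · rw [eL' _ (by linarith)] at h
      exact h
  have F1 : m.1 0 + a * m.1 1 ≤ m.1 3 := by
    have h := dual_low hopt 3 0 1 (by decide) 1 a
      (by norm_num [alphaA, Matrix.vecHead, Matrix.vecTail, Matrix.cons_val_two, Matrix.cons_val_three]) (by norm_num [alphaA, Matrix.vecHead, Matrix.vecTail, Matrix.cons_val_two, Matrix.cons_val_three]) (by norm_num [alphaA, Matrix.vecHead, Matrix.vecTail, Matrix.cons_val_two, Matrix.cons_val_three])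
    rw [eL _ (by norm_num), eL _ ha0.le] at h
    linarith
  have F2 : (a^2-1) * m.1 1 + m.1 2 ≤ a * m.1 3 := by
    have h := dual_low hopt 3 1 2 (by decide) ((a^2-1)/a) (1/a)
      (by norm_num [alphaA, Matrix.vecHead, Matrix.vecTail, Matrix.cons_val_two, Matrix.cons_val_three] <;> field_simp) (by norm_num [alphaA, Matrix.vecHead, Matrix.vecTail, Matrix.cons_val_two, Matrix.cons_val_three] <;> field_simp <;> ring_nf)
      (by norm_num [alphaA, Matrix.vecHead, Matrix.vecTail, Matrix.cons_val_two, Matrix.cons_val_three] <;> exact fun hc => ha0' (by linarith))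
    rw [eL _ (div_nonneg hsq ha0.le), eL _ hia.le] at h
    have h2 : a * ((a^2-1)/a * m.1 1 + 1/a * m.1 2) = (a^2-1) * m.1 1 + m.1 2 := by
      field_simp <;> ring_nf
    linarith [mul_le_mul_of_nonneg_left h ha0.le]
  have F3 : (1-a^2) * m.2 0 + a * m.1 2 ≤ m.1 3 := by
    have h := dual_low hopt 3 0 2 (by decide) (1-a^2) a
      (by norm_num [alphaA, Matrix.vecHead, Matrix.vecTail, Matrix.cons_val_two, Matrix.cons_val_three] <;> ring) (by norm_num [alphaA, Matrix.vecHead, Matrix.vecTail, Matrix.cons_val_two, Matrix.cons_val_three]) (by norm_num [alphaA, Matrix.vecHead, Matrix.vecTail, Matrix.cons_val_two, Matrix.cons_val_three])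
    rw [eL _ ha0.le] at h
    rcases eq_or_lt_of_le hsq with h1a | h1a
    · have hz : 1 - a^2 = 0 := by linarith
      rw [hz] at h ⊢
      simpa using h
    · rw [eL' _ (by linarith)] at h
      exact h
  -- case split on a = 1 or a > 1
  rcases eq_or_lt_of_le ha with ha1 | ha1
  · -- a = 1
    subst ha1
    -- rows 2 and 3 coincide
    have S1 : m.1 3 ≤ m.1 2 := by
      have h := dual_low hopt 2 3 0 (by decide) 1 0
        (by norm_num [alphaA, Matrix.vecHead, Matrix.vecTail, Matrix.cons_val_two, Matrix.cons_val_three]) (by norm_num [alphaA, Matrix.vecHead, Matrix.vecTail, Matrix.cons_val_two, Matrix.cons_val_three]) (by norm_num [alphaA, Matrix.vecHead, Matrix.vecTail, Matrix.cons_val_two, Matrix.cons_val_three])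
      rw [eL _ (by norm_num), eL _ (by norm_num)] at h
      linarith
    have S2 : m.1 2 ≤ m.1 3 := by
      have h := dual_low hopt 3 2 0 (by decide) 1 0
        (by norm_num [alphaA, Matrix.vecHead, Matrix.vecTail, Matrix.cons_val_two, Matrix.cons_val_three]) (by norm_num [alphaA, Matrix.vecHead, Matrix.vecTail, Matrix.cons_val_two, Matrix.cons_val_three]) (by norm_num [alphaA, Matrix.vecHead, Matrix.vecTail, Matrix.cons_val_two, Matrix.cons_val_three])
      rw [eL _ (by norm_num), eL _ (by norm_num)] at h
      linarith
    have S1' : m.2 2 ≤ m.2 3 := by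
      have h := dual_high hopt 2 3 0 (by decide) 1 0
        (by norm_num [alphaA, Matrix.vecHead, Matrix.vecTail, Matrix.cons_val_two, Matrix.cons_val_three]) (by norm_num [alphaA, Matrix.vecHead, Matrix.vecTail, Matrix.cons_val_two, Matrix.cons_val_three]) (by norm_num [alphaA, Matrix.vecHead, Matrix.vecTail, Matrix.cons_val_two, Matrix.cons_val_three])
      rw [eH _ (by norm_num), eH _ (by norm_num)] at h
      linarith
    have S2' : m.2 3 ≤ m.2 2 := by
      have h := dual_high hopt 3 2 0 (by decide) 1 0
        (by norm_num [alphaA, Matrix.vecHead, Matrix.vecTail, Matrix.cons_val_two, Matrix.cons_val_three]) (by norm_num [alphaA, Matrix.vecHead, Matrix.vecTail, Matrix.cons_val_two, Matrix.cons_val_three]) (by norm_num [alphaA, Matrix.vecHead, Matrix.vecTail, Matrix.cons_val_two, Matrix.cons_val_three])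
      rw [eH _ (by norm_num), eH _ (by norm_num)] at h
      linarith
    have goal1 : 0 ≤ m.1 0 := by
      by_contra hg
      push_neg at hg
      obtain ⟨x, y, hx1, hx2, hy1, hy2, hr2, hr2'⟩ :=
        FM1 (m.1 0) 0 (m.1 1) (m.2 1) (m.1 2) (m.2 2) hg (by linarith) (by linarith)
          (by linarith) (by linarith)
      have hmem : ![x, y] ∈ PolySet (alphaA 1) m := by
        rw [mem_polySet_iff]
        norm_num
        refine ⟨⟨?_, ?_⟩, ⟨?_, ?_⟩, ⟨?_, ?_⟩, ⟨?_, ?_⟩⟩ <;>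
          linarith [hx1, hx2, hy1, hy2, hr2, hr2', S1, S2, S1', S2', hP0, hP0', hP1, hP1', hpc0.1, hpc1.1, hp2', hpu.1]
      have hcx := (hsub hmem) 0
      norm_num at hcx
      linarith [hcx.1]
    have goal2 : m.2 0 ≤ 1/2 := by
      by_contra hg
      push_neg at hg
      obtain ⟨x, y, hx1, hx2, hy1, hy2, hr2, hr2'⟩ :=
        FM1 (1/2) (m.2 0) (m.1 1) (m.2 1) (m.1 2) (m.2 2) hg (by linarith) (by linarith)
          (by linarith) (by linarith)
      have hmem : ![x, y] ∈ PolySet (alphaA 1) m := by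
        rw [mem_polySet_iff]
        norm_num
        refine ⟨⟨?_, ?_⟩, ⟨?_, ?_⟩, ⟨?_, ?_⟩, ⟨?_, ?_⟩⟩ <;>
          linarith [hx1, hx2, hy1, hy2, hr2, hr2', S1, S2, S1', S2', hP0, hP0', hP1, hP1', hpc0.1, hpc1.1, hp2', hpu.1]
      have := (huniv _ hmem).1
      norm_num at this
      linarith
    have goal4b : m.2 1 ≤ 1 := by
      by_contra hg
      push_neg at hg
      obtain ⟨x, y, hx1, hx2, hy1, hy2, hr2, hr2'⟩ :=
        FM1 (m.1 0) (m.2 0) 1 (m.2 1) (m.1 2) (m.2 2) (by linarith) hg (by linarith)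
          (by linarith) (by linarith)
      have hmem : ![x, y] ∈ PolySet (alphaA 1) m := by
        rw [mem_polySet_iff]
        norm_num
        refine ⟨⟨?_, ?_⟩, ⟨?_, ?_⟩, ⟨?_, ?_⟩, ⟨?_, ?_⟩⟩ <;>
          linarith [hx1, hx2, hy1, hy2, hr2, hr2', S1, S2, S1', S2', hP0, hP0', hP1, hP1', hpc0.1, hpc1.1, hp2', hpu.1]
      have hcx := (hsub hmem) 1
      norm_num at hcx
      linarith [hcx.2]
    have goal5 : 1/2 ≤ m.1 2 := by
      by_contra hg
      push_neg at hg
      obtain ⟨x, y, hx1, hx2, hy1, hy2, hr2, hr2'⟩ :=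
        FM1 (m.1 0) (m.2 0) (m.1 1) (m.2 1) (m.1 2) (1/2) (by linarith) (by linarith) hg
          (by linarith) (by linarith)
      have hmem : ![x, y] ∈ PolySet (alphaA 1) m := by
        rw [mem_polySet_iff]
        norm_num
        refine ⟨⟨?_, ?_⟩, ⟨?_, ?_⟩, ⟨?_, ?_⟩, ⟨?_, ?_⟩⟩ <;>
          linarith [hx1, hx2, hy1, hy2, hr2, hr2', S1, S2, S1', S2', hP0, hP0', hP1, hP1', hpc0.1, hpc1.1, hp2', hpu.1]
      have := (huniv _ hmem).2.1
      norm_num at this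
      linarith
    exact ⟨goal1, goal2, goal3, ⟨goal4a, goal4b⟩, goal5, by linarith⟩
  · -- a > 1
    have ha2 : (0:ℝ) < a^2 - 1 := by
      have h := mul_pos (by linarith : (0:ℝ) < a-1) (by linarith : (0:ℝ) < a+1)
      linarith [h]
    have A3 : a * m.1 2 - m.2 3 ≤ (a^2-1) * m.1 0 := by
      have h := dual_low hopt 0 2 3 (by decide) (a/(a^2-1)) (-(1/(a^2-1)))
        (by norm_num [alphaA, Matrix.vecHead, Matrix.vecTail, Matrix.cons_val_two, Matrix.cons_val_three] <;> field_simp <;> ring_nf) (by norm_num [alphaA, Matrix.vecHead, Matrix.vecTail, Matrix.cons_val_two, Matrix.cons_val_three] <;> field_simp <;> ring_nf)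
        (by norm_num [alphaA, Matrix.vecHead, Matrix.vecTail, Matrix.cons_val_two, Matrix.cons_val_three] <;> exact fun hc => by linarith [ha2])
      rw [eL _ (by positivity), eL' _ (by rw [neg_lt, neg_zero]; positivity)] at h
      have h2 : (a^2-1) * (a/(a^2-1) * m.1 2 + -(1/(a^2-1)) * m.2 3)
          = a * m.1 2 - m.2 3 := by field_simp <;> ring_nf
      linarith [mul_le_mul_of_nonneg_left h ha2.le]
    have D3 : (a^2-1) * m.2 0 ≤ a * m.2 2 - m.1 3 := by
      have h := dual_high hopt 0 2 3 (by decide) (a/(a^2-1)) (-(1/(a^2-1)))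
        (by norm_num [alphaA, Matrix.vecHead, Matrix.vecTail, Matrix.cons_val_two, Matrix.cons_val_three] <;> field_simp <;> ring_nf) (by norm_num [alphaA, Matrix.vecHead, Matrix.vecTail, Matrix.cons_val_two, Matrix.cons_val_three] <;> field_simp <;> ring_nf)
        (by norm_num [alphaA, Matrix.vecHead, Matrix.vecTail, Matrix.cons_val_two, Matrix.cons_val_three] <;> exact fun hc => by linarith [ha2])
      rw [eH _ (by positivity), eH' _ (by rw [neg_lt, neg_zero]; positivity)] at h
      have h2 : (a^2-1) * (a/(a^2-1) * m.2 2 + -(1/(a^2-1)) * m.1 3)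
          = a * m.2 2 - m.1 3 := by field_simp <;> ring_nf
      linarith [mul_le_mul_of_nonneg_left h ha2.le]
    have D4 : (a^2-1) * m.2 1 ≤ a * m.2 3 - m.1 2 := by
      have h := dual_high hopt 1 2 3 (by decide) (-(1/(a^2-1))) (a/(a^2-1))
        (by norm_num [alphaA, Matrix.vecHead, Matrix.vecTail, Matrix.cons_val_two, Matrix.cons_val_three] <;> field_simp <;> ring_nf) (by norm_num [alphaA, Matrix.vecHead, Matrix.vecTail, Matrix.cons_val_two, Matrix.cons_val_three] <;> field_simp <;> ring_nf)
        (by norm_num [alphaA, Matrix.vecHead, Matrix.vecTail, Matrix.cons_val_two, Matrix.cons_val_three] <;> exact fun hc => by linarith [ha2])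
      rw [eH' _ (by rw [neg_lt, neg_zero]; positivity), eH _ (by positivity)] at h
      have h2 : (a^2-1) * (-(1/(a^2-1)) * m.1 2 + a/(a^2-1) * m.2 3)
          = a * m.2 3 - m.1 2 := by field_simp; ring
      linarith [mul_le_mul_of_nonneg_left h ha2.le]
    -- frequently used products
    have mp0 : a * m.1 0 < a * p 0 := mul_lt_mul_of_pos_left hP0 ha0
    have mp1 : a * m.1 1 < a * p 1 := mul_lt_mul_of_pos_left hP1 ha0
    have mp0' : a * p 0 < a * m.2 0 := mul_lt_mul_of_pos_left hP0' ha0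
    have mp1' : a * p 1 < a * m.2 1 := mul_lt_mul_of_pos_left hP1' ha0
    have mu01 : a * m.1 0 < a * m.2 0 := mul_lt_mul_of_pos_left (lt_trans hP0 hP0') ha0
    have mu23 : a * m.1 2 < a * m.2 2 := mul_lt_mul_of_pos_left (lt_trans hP2 hP2') ha0
    have mu33 : a * m.1 3 < a * m.2 3 := mul_lt_mul_of_pos_left (lt_trans hP3 hP3') ha0
    have m2p : a * m.1 2 < a * (a * p 0 + p 1) := mul_lt_mul_of_pos_left hP2 ha0
    have m2p' : a * (a * p 0 + p 1) < a * m.2 2 := mul_lt_mul_of_pos_left hP2' ha0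
    have m3p : a * m.1 3 < a * (p 0 + a * p 1) := mul_lt_mul_of_pos_left hP3 ha0
    have s0 : (0:ℝ) ≤ (a^2-1) * p 0 := mul_nonneg ha2.le hpc0.1.le
    have s1 : (0:ℝ) ≤ (a^2-1) * p 1 := mul_nonneg ha2.le hpc1.1.le
    have s2 : (a^2-1) * m.1 0 < (a^2-1) * p 0 := mul_lt_mul_of_pos_left hP0 ha2
    have s2' : (a^2-1) * p 0 < (a^2-1) * m.2 0 := mul_lt_mul_of_pos_left hP0' ha2
    have s3 : (a^2-1) * m.1 1 < (a^2-1) * m.2 1 := mul_lt_mul_of_pos_left (lt_trans hP1 hP1') ha2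
    have s4 : (a^2-1) * p 1 < (a^2-1) * m.2 1 := mul_lt_mul_of_pos_left hP1' ha2
    have s5 : (a^2-1) * m.1 3 < (a^2-1) * m.2 3 := mul_lt_mul_of_pos_left (lt_trans hP3 hP3') ha2
    have s6 : (a^2-1) * m.1 3 < (a^2-1) * (p 0 + a * p 1) := mul_lt_mul_of_pos_left hP3 ha2
    have goal1 : 0 ≤ m.1 0 := by
      by_contra hg
      push_neg at hg
      have hga : a * m.1 0 < 0 := mul_neg_of_pos_of_neg ha0 hg
      have hga2 : (a^2-1) * m.1 0 < 0 := mul_neg_of_pos_of_neg ha2 hg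
      have hgaa : a^2 * m.1 0 < 0 := mul_neg_of_pos_of_neg (by positivity) hg
      obtain ⟨x, y, hx1, hx2, hy1, hy2, hr2, hr2', hr3, hr3'⟩ :=
        FM2 a (m.1 0) 0 (m.1 1) (m.2 1) (m.1 2) (m.2 2) (m.1 3) (m.2 3) ha1
          hg (by linarith) (by linarith)
          (by linarith)
          (by linarith [mp0])
          (by linarith [mp1])
          (by linarith [F2, mu33])
          (by linarith [A1, hga])
          (by linarith [hga])
          (by linarith [A3, hga2])
          (by linarith [A3, hga2])
          (by linarith [A2])
          (by linarith [m2p', s0, hgaa, hP3])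
          (by linarith)
          (by linarith [A3, hga2, s5])
          (by linarith [m3p, hP2', s4])
          (by linarith [hP3, hga2, m2p', s0])
          (by linarith [hP3, hga2, m2p', s0, s5])
          (by linarith [mu33])
      have hmem : ![x, y] ∈ PolySet (alphaA a) m := by
        rw [mem_polySet_iff]
        norm_num
        refine ⟨⟨?_, ?_⟩, ⟨?_, ?_⟩, ⟨?_, ?_⟩, ⟨?_, ?_⟩⟩ <;>
          linarith [hx1, hx2, hy1, hy2, hr2, hr2', hr3, hr3', hP0, hP0', hP1, hP1', hP2, hP2', hP3, hP3', hpc0.1, hpc1.1, hp2', hpu.1, hpu.2.1, mul_nonneg (sub_nonneg.mpr ha) hpc0.1.le, mul_nonneg (sub_nonneg.mpr ha) hpc1.1.le]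
      have hcx := (hsub hmem) 0
      norm_num at hcx
      linarith [hcx.1]
    have goal2 : m.2 0 ≤ 1/2 := by
      by_contra hg
      push_neg at hg
      have hga : a * (1/2) < a * m.2 0 := mul_lt_mul_of_pos_left hg ha0
      have hgaa : a^2 * (1/2) < a^2 * m.2 0 := mul_lt_mul_of_pos_left hg (by positivity)
      have hga2 : (a^2-1) * (1/2) < (a^2-1) * m.2 0 := mul_lt_mul_of_pos_left hg ha2
      have hpu1 : (a^2-1) * p 0 ≤ (a^2-1) * (1/2) := mul_le_mul_of_nonneg_left hpu.1 ha2.le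
      obtain ⟨x, y, hx1, hx2, hy1, hy2, hr2, hr2', hr3, hr3'⟩ :=
        FM2 a (1/2) (m.2 0) (m.1 1) (m.2 1) (m.1 2) (m.2 2) (m.1 3) (m.2 3) ha1
          hg (by linarith) (by linarith)
          (by linarith)
          (by linarith [D1, hga])
          (by linarith [D2, hg])
          (by linarith [D4, s3])
          (by linarith [hP2, mp0', hP1'])
          (by linarith [hP2, hP2', hga])
          (by linarith [m2p, hP3', hpu1, hgaa])
          (by linarith [m2p, hP3', s2'])
          (by linarith [hP3, hP0', mp1'])
          (by linarith [D3, hgaa])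
          (by linarith [hP3, hP3', hg])
          (by linarith [s6, m2p, mul_lt_mul_of_pos_left hP3' (by positivity : (0:ℝ) < a^2), s2'])
          (by linarith [m3p, hP2', s4])
          (by linarith [D3, hga2])
          (by linarith [D3, hga2, s5])
          (by linarith [mu33, hP2, hP2'])
      have hmem : ![x, y] ∈ PolySet (alphaA a) m := by
        rw [mem_polySet_iff]
        norm_num
        refine ⟨⟨?_, ?_⟩, ⟨?_, ?_⟩, ⟨?_, ?_⟩, ⟨?_, ?_⟩⟩ <;>
          linarith [hx1, hx2, hy1, hy2, hr2, hr2', hr3, hr3', hP0, hP0', hP1, hP1', hP2, hP2', hP3, hP3', hpc0.1, hpc1.1, hp2', hpu.1, hpu.2.1, mul_nonneg (sub_nonneg.mpr ha) hpc0.1.le, mul_nonneg (sub_nonneg.mpr ha) hpc1.1.le]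
      have := (huniv _ hmem).1
      norm_num at this
      linarith
    have goal4b : m.2 1 ≤ 1 := by
      by_contra hg
      push_neg at hg
      have hga : a * 1 < a * m.2 1 := mul_lt_mul_of_pos_left hg ha0
      have hga2 : (a^2-1) * 1 < (a^2-1) * m.2 1 := mul_lt_mul_of_pos_left hg ha2
      obtain ⟨x, y, hx1, hx2, hy1, hy2, hr2, hr2', hr3, hr3'⟩ :=
        FM2 a (m.1 0) (m.2 0) 1 (m.2 1) (m.1 2) (m.2 2) (m.1 3) (m.2 3) ha1
          (by linarith) (by linarith) (by linarith)
          hg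
          (by linarith [G1, hg])
          (by linarith [G2, hga])
          (by linarith [D4, hga2])
          (by linarith [hP2, mp0', hP1'])
          (by linarith [hP2, hP2', mu01])
          (by linarith [m2p, hP0, hP3', mul_lt_mul_of_pos_left hP0' (by positivity : (0:ℝ) < a^2)])
          (by linarith [m2p, hP3', s2'])
          (by linarith [hP3, hP0', mp1'])
          (by linarith [hP3, mul_lt_mul_of_pos_left hP0 (by positivity : (0:ℝ) < a^2), m2p', hP0'])
          (by linarith [hP3, hP3'])
          (by linarith [s6, m2p, mul_lt_mul_of_pos_left hP3' (by positivity : (0:ℝ) < a^2), s2'])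
          (by linarith [m3p, hP2', s4])
          (by linarith [hP3, s2, m2p', s0])
          (by linarith [hP3, s2, m2p', s0, s5])
          (by linarith [mu33, hP2, hP2'])
      have hmem : ![x, y] ∈ PolySet (alphaA a) m := by
        rw [mem_polySet_iff]
        norm_num
        refine ⟨⟨?_, ?_⟩, ⟨?_, ?_⟩, ⟨?_, ?_⟩, ⟨?_, ?_⟩⟩ <;>
          linarith [hx1, hx2, hy1, hy2, hr2, hr2', hr3, hr3', hP0, hP0', hP1, hP1', hP2, hP2', hP3, hP3', hpc0.1, hpc1.1, hp2', hpu.1, hpu.2.1, mul_nonneg (sub_nonneg.mpr ha) hpc0.1.le, mul_nonneg (sub_nonneg.mpr ha) hpc1.1.le]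
      have hcx := (hsub hmem) 1
      norm_num at hcx
      linarith [hcx.2]
    have goal5 : 1/2 ≤ m.1 2 := by
      by_contra hg
      push_neg at hg
      have hga : a * m.1 2 < a * (1/2) := mul_lt_mul_of_pos_left hg ha0
      obtain ⟨x, y, hx1, hx2, hy1, hy2, hr2, hr2', hr3, hr3'⟩ :=
        FM2 a (m.1 0) (m.2 0) (m.1 1) (m.2 1) (m.1 2) (1/2) (m.1 3) (m.2 3) ha1
          (by linarith) hg (by linarith)
          (by linarith)
          (by linarith [E1, hg])
          (by linarith [hP1, mp1, hP3', hP0])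
          (by linarith [F2, mu33])
          (by linarith [hP2, mp0', hP1'])
          (by linarith [hg, mu01])
          (by linarith [m2p, hP0, hP3', mul_lt_mul_of_pos_left hP0' (by positivity : (0:ℝ) < a^2)])
          (by linarith [m2p, hP3', s2'])
          (by linarith [hP3, hP0', mp1'])
          (by linarith [E2, hga, hP0, hP0'])
          (by linarith [hP3, hP3'])
          (by linarith [s6, m2p, mul_lt_mul_of_pos_left hP3' (by positivity : (0:ℝ) < a^2), s2'])
          (by linarith [E3, hg, s4])
          (by linarith [E2, hga])
          (by linarith [E2, hga, s5])
          (by linarith [mu33, hg])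
      have hmem : ![x, y] ∈ PolySet (alphaA a) m := by
        rw [mem_polySet_iff]
        norm_num
        refine ⟨⟨?_, ?_⟩, ⟨?_, ?_⟩, ⟨?_, ?_⟩, ⟨?_, ?_⟩⟩ <;>
          linarith [hx1, hx2, hy1, hy2, hr2, hr2', hr3, hr3', hP0, hP0', hP1, hP1', hP2, hP2', hP3, hP3', hpc0.1, hpc1.1, hp2', hpu.1, hpu.2.1, mul_nonneg (sub_nonneg.mpr ha) hpc0.1.le, mul_nonneg (sub_nonneg.mpr ha) hpc1.1.le]
      have h1 := (huniv _ hmem).2.1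
      have h2 := (hsub hmem) 0
      norm_num at h1 h2
      linarith [h1, h2.1, hr2', mul_nonneg (sub_nonneg.mpr ha) h2.1.le]
    have goal6 : 1/2 ≤ m.1 3 := by
      by_contra hg
      push_neg at hg
      have hga : a * m.1 3 < a * (1/2) := mul_lt_mul_of_pos_left hg ha0
      have hgaa : a^2 * m.1 3 < a^2 * (1/2) := mul_lt_mul_of_pos_left hg (by positivity)
      have hga2 : (a^2-1) * m.1 3 < (a^2-1) * (1/2) := mul_lt_mul_of_pos_left hg ha2
      obtain ⟨x, y, hx1, hx2, hy1, hy2, hr2, hr2', hr3, hr3'⟩ :=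
        FM2 a (m.1 0) (m.2 0) (m.1 1) (m.2 1) (m.1 2) (m.2 2) (m.1 3) (1/2) ha1
          (by linarith) (by linarith) hg
          (by linarith)
          (by linarith [hP1, mp0, hP2'])
          (by linarith [F1, hg])
          (by linarith [F2, hga])
          (by linarith [hP2, mp0', hP1'])
          (by linarith [hP2, hP2', mu01])
          (by linarith [F3, hg, s2', hP0, hP0'])
          (by linarith [F3, hg, s2'])
          (by linarith [hP3, hP0', mp1'])
          (by linarith [hP3, mul_lt_mul_of_pos_left hP0 (by positivity : (0:ℝ) < a^2), m2p', hP0'])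
          (by linarith [hg, hP0, hP0'])
          (by linarith [F3, hg, hgaa, s2'])
          (by linarith [m3p, hP2', s4])
          (by linarith [hP3, s2, m2p', s0])
          (by linarith [hP3, s2, m2p', s0, hga2])
          (by linarith [hga, hP2, hP2'])
      have hmem : ![x, y] ∈ PolySet (alphaA a) m := by
        rw [mem_polySet_iff]
        norm_num
        refine ⟨⟨?_, ?_⟩, ⟨?_, ?_⟩, ⟨?_, ?_⟩, ⟨?_, ?_⟩⟩ <;>
          linarith [hx1, hx2, hy1, hy2, hr2, hr2', hr3, hr3', hP0, hP0', hP1, hP1', hP2, hP2', hP3, hP3', hpc0.1, hpc1.1, hp2', hpu.1, hpu.2.1, mul_nonneg (sub_nonneg.mpr ha) hpc0.1.le, mul_nonneg (sub_nonneg.mpr ha) hpc1.1.le]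
      have h1 := (huniv _ hmem).2.1
      have h2 := (hsub hmem) 1
      norm_num at h1 h2
      linarith [h1, h2.1, hr3', mul_nonneg (sub_nonneg.mpr ha) h2.1.le]
    exact ⟨goal1, goal2, goal3, ⟨goal4a, goal4b⟩, goal5, goal6⟩
end

section
/- Let α be the canonical 6×3 coefficient matrix with rows e₁, e₂, e₃, e₁+e₂, e₂+e₃, e₁+e₂+e₃, let O be its associated optimization map, and index the entries of a constraint matrix m by the six linear forms x₁, x₂, x₃, x₁+x₂, x₂+x₃, x₁+x₂+x₃. Let m = O(m) be an optimized constraint matrix whose polytope P^α_m is nonempty, contained in (0,1)³, and satisfies σ₄₃₂₁(P^α_m) = P^α_m, where σ₄₃₂₁(x) = (1−x₃, 1−x₂, 1−x₁). Then m̲₁ + m̄₃ = m̄₁ + m̲₃ = m̲₂ + m̄₂ = 1, m̲_{1+2} + m̄_{2+3} = m̄_{1+2} + m̲_{2+3} = 2, and m̲_{1+2+3} + m̄_{1+2+3} = 3. -/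
open Set

/-- The open unit cube `(0,1)³`. -/
def cube3 : Set (Fin 3 → ℝ) := {x | ∀ i, 0 < x i ∧ x i < 1}

/-- The map `G_{3,ε}`. -/
noncomputable def G3 (ε : ℝ) (x : Fin 3 → ℝ) : Fin 3 → ℝ :=
  ![2*(1-ε)*x 0 + 2*ε*((2*hfun (x 0) - hfun (x 1) + hfun (x 0 + x 1) - hfun (x 1 + x 2)
      + hfun (x 0 + x 1 + x 2))/4) - hfun (x 0),
    2*(1-ε)*x 1 + 2*ε*((2*hfun (x 1) - hfun (x 0) - hfun (x 2) + hfun (x 0 + x 1)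
      + hfun (x 1 + x 2))/4) - hfun (x 1),
    2*(1-ε)*x 2 + 2*ε*((2*hfun (x 2) - hfun (x 1) - hfun (x 0 + x 1) + hfun (x 1 + x 2)
      + hfun (x 0 + x 1 + x 2))/4) - hfun (x 2)]

/-- The atom `A_ω` with label `ω = (h(x₁),h(x₂),h(x₃),h(x₁+x₂),h(x₂+x₃),h(x₁+x₂+x₃))`. -/
noncomputable def Atom3 (ω : Fin 6 → ℤ) : Set (Fin 3 → ℝ) :=
  {x | x ∈ cube3 ∧ hfun (x 0) = (ω 0 : ℝ) ∧ hfun (x 1) = (ω 1 : ℝ) ∧ hfun (x 2) = (ω 2 : ℝ) ∧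
       hfun (x 0 + x 1) = (ω 3 : ℝ) ∧ hfun (x 1 + x 2) = (ω 4 : ℝ) ∧
       hfun (x 0 + x 1 + x 2) = (ω 5 : ℝ)}

/-- Componentwise fractional part. -/
noncomputable def frv (v : Fin 3 → ℝ) : Fin 3 → ℝ := fun i => Int.fract (v i)

noncomputable def sigma4231 (x : Fin 3 → ℝ) : Fin 3 → ℝ := frv ![-(x 1) - x 2, x 1, -(x 0) - x 1]
noncomputable def sigma1324 (x : Fin 3 → ℝ) : Fin 3 → ℝ := frv ![x 0 + x 1, -(x 1), x 1 + x 2]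
noncomputable def sigma4321 (x : Fin 3 → ℝ) : Fin 3 → ℝ := frv ![-(x 2), -(x 1), -(x 0)]
noncomputable def sigma2134 (x : Fin 3 → ℝ) : Fin 3 → ℝ := frv ![-(x 0), x 0 + x 1, x 2]
noncomputable def sigma3124 (x : Fin 3 → ℝ) : Fin 3 → ℝ := frv ![-(x 0) - x 1, x 0, x 1 + x 2]

/-- The symmetry `Σ(x) = (1-x₁, 1-x₂, 1-x₃)`. -/
def Sig3 (x : Fin 3 → ℝ) : Fin 3 → ℝ := fun i => 1 - x i

/-- The canonical 6×3 coefficient matrix with rows `e₁,e₂,e₃,e₁+e₂,e₂+e₃,e₁+e₂+e₃`. -/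
def alpha6 : Matrix (Fin 6) (Fin 3) ℝ := !![1,0,0; 0,1,0; 0,0,1; 1,1,0; 0,1,1; 1,1,1]

/-- The affine symmetry `σ₄₃₂₁(x) = (1-x₃, 1-x₂, 1-x₁)`. -/
def sigma4321aff (x : Fin 3 → ℝ) : Fin 3 → ℝ := ![1 - x 2, 1 - x 1, 1 - x 0]

lemma mv_a6 (x : Fin 3 → ℝ) : ∀ i, alpha6.mulVec x i =
    ![x 0, x 1, x 2, x 0 + x 1, x 1 + x 2, x 0 + x 1 + x 2] i := by
  have h : ∀ i : Fin 6, alpha6.mulVec x i =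
      alpha6 i 0 * x 0 + alpha6 i 1 * x 1 + alpha6 i 2 * x 2 := by
    intro i
    simp [Matrix.mulVec, dotProduct, Fin.sum_univ_three]
  intro i
  rw [h]
  fin_cases i
  · show (1:ℝ)*x 0+0*x 1+0*x 2 = x 0; ring
  · show (0:ℝ)*x 0+1*x 1+0*x 2 = x 1; ring
  · show (0:ℝ)*x 0+0*x 1+1*x 2 = x 2; ring
  · show (1:ℝ)*x 0+1*x 1+0*x 2 = x 0 + x 1; ring
  · show (0:ℝ)*x 0+1*x 1+1*x 2 = x 1 + x 2; ring
  · show (1:ℝ)*x 0+1*x 1+1*x 2 = x 0 + x 1 + x 2; ring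

lemma mem_poly {m : CM 6} {x : Fin 3 → ℝ} : x ∈ PolySet alpha6 m ↔
    ((m.1 0 < x 0 ∧ x 0 < m.2 0) ∧ (m.1 1 < x 1 ∧ x 1 < m.2 1) ∧ (m.1 2 < x 2 ∧ x 2 < m.2 2) ∧
     (m.1 3 < x 0 + x 1 ∧ x 0 + x 1 < m.2 3) ∧ (m.1 4 < x 1 + x 2 ∧ x 1 + x 2 < m.2 4) ∧
     (m.1 5 < x 0 + x 1 + x 2 ∧ x 0 + x 1 + x 2 < m.2 5)) := by
  constructor
  · intro h
    have h0 := h 0; have h1 := h 1; have h2 := h 2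
    have h3 := h 3; have h4 := h 4; have h5 := h 5
    rw [mv_a6] at h0 h1 h2 h3 h4 h5
    exact ⟨by simpa using h0, by simpa using h1, by simpa using h2,
      by simpa using h3, by simpa using h4, by simpa using h5⟩
  · rintro ⟨h0, h1, h2, h3, h4, h5⟩ i
    rw [mv_a6]
    fin_cases i <;> simpa using ‹_›

lemma lambda_sum {e d : ℕ} {α : Matrix (Fin e) (Fin d) ℝ} {m : CM e} {x : Fin d → ℝ}
    (hx : x ∈ PolySet α m) {i : Fin e} {l : Fin e → ℝ} (hl : l ∈ Lambda α i) :
    ∑ k, l k * α.mulVec x k = α.mulVec x i := by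
  obtain ⟨S, -, -, heq, -⟩ := hl
  have h1 : ∀ k, l k * α.mulVec x k = ∑ j, l k * α k j * x j := by
    intro k
    simp only [Matrix.mulVec, dotProduct, Finset.mul_sum, mul_assoc]
  calc ∑ k, l k * α.mulVec x k = ∑ k, ∑ j, l k * α k j * x j := by
        exact Finset.sum_congr rfl fun k _ => h1 k
    _ = ∑ j, ∑ k, l k * α k j * x j := Finset.sum_comm
    _ = ∑ j, α i j * x j := by
        refine Finset.sum_congr rfl fun j _ => ?_
        rw [← Finset.sum_mul]
        rw [heq j]
    _ = α.mulVec x i := by simp [Matrix.mulVec, dotProduct]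

lemma low_le {e d : ℕ} {α : Matrix (Fin e) (Fin d) ℝ} {m : CM e} {x : Fin d → ℝ}
    (hx : x ∈ PolySet α m) {i : Fin e} {l : Fin e → ℝ} (hl : l ∈ Lambda α i) :
    ∑ k, l k * eLow (l k) m k ≤ α.mulVec x i := by
  rw [← lambda_sum hx hl]
  refine Finset.sum_le_sum fun k _ => ?_
  by_cases h : 0 ≤ l k
  · rw [eLow, if_pos h]
    exact mul_le_mul_of_nonneg_left (hx k).1.le h
  · rw [eLow, if_neg h]
    exact mul_le_mul_of_nonpos_left (hx k).2.le (le_of_not_ge h)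

lemma high_ge {e d : ℕ} {α : Matrix (Fin e) (Fin d) ℝ} {m : CM e} {x : Fin d → ℝ}
    (hx : x ∈ PolySet α m) {i : Fin e} {l : Fin e → ℝ} (hl : l ∈ Lambda α i) :
    α.mulVec x i ≤ ∑ k, l k * eHigh (l k) m k := by
  rw [← lambda_sum hx hl]
  refine Finset.sum_le_sum fun k _ => ?_
  by_cases h : 0 ≤ l k
  · rw [eHigh, if_pos h]
    exact mul_le_mul_of_nonneg_left (hx k).2.le h
  · rw [eHigh, if_neg h]
    exact mul_le_mul_of_nonpos_left (hx k).1.le (le_of_not_ge h)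

lemma opt_low {e d : ℕ} {α : Matrix (Fin e) (Fin d) ℝ} {m : CM e} (hopt : m = Opt α m)
    {x : Fin d → ℝ} (hx : x ∈ PolySet α m) {i : Fin e} {l : Fin e → ℝ} (hl : l ∈ Lambda α i) :
    ∑ k, l k * eLow (l k) m k ≤ m.1 i := by
  have h1 : m.1 i = sSup ((fun l : Fin e → ℝ => ∑ k, l k * eLow (l k) m k) '' Lambda α i) := by
    conv_lhs => rw [hopt]
    rfl
  rw [h1]
  refine le_csSup ⟨α.mulVec x i, ?_⟩ ⟨l, hl, rfl⟩
  rintro v ⟨l', hl', rfl⟩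
  exact low_le hx hl'

lemma opt_high {e d : ℕ} {α : Matrix (Fin e) (Fin d) ℝ} {m : CM e} (hopt : m = Opt α m)
    {x : Fin d → ℝ} (hx : x ∈ PolySet α m) {i : Fin e} {l : Fin e → ℝ} (hl : l ∈ Lambda α i) :
    m.2 i ≤ ∑ k, l k * eHigh (l k) m k := by
  have h1 : m.2 i = sInf ((fun l : Fin e → ℝ => ∑ k, l k * eHigh (l k) m k) '' Lambda α i) := by
    conv_lhs => rw [hopt]
    rfl
  rw [h1]
  refine csInf_le ⟨α.mulVec x i, ?_⟩ ⟨l, hl, rfl⟩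
  rintro v ⟨l', hl', rfl⟩
  exact high_ge hx hl'

@[simp] lemma cons_val_two' {α : Type*} (a b c d e f : α) : ![a,b,c,d,e,f] 2 = c := rfl
@[simp] lemma cons_val_three' {α : Type*} (a b c d e f : α) : ![a,b,c,d,e,f] 3 = d := rfl
@[simp] lemma cons_val_four' {α : Type*} (a b c d e f : α) : ![a,b,c,d,e,f] 4 = e := rfl
@[simp] lemma cons_val_five' {α : Type*} (a b c d e f : α) : ![a,b,c,d,e,f] 5 = f := rfl

@[simp] lemma a6_00 : alpha6 0 0 = 1 := rfl
@[simp] lemma a6_01 : alpha6 0 1 = 0 := rfl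
@[simp] lemma a6_02 : alpha6 0 2 = 0 := rfl
@[simp] lemma a6_10 : alpha6 1 0 = 0 := rfl
@[simp] lemma a6_11 : alpha6 1 1 = 1 := rfl
@[simp] lemma a6_12 : alpha6 1 2 = 0 := rfl
@[simp] lemma a6_20 : alpha6 2 0 = 0 := rfl
@[simp] lemma a6_21 : alpha6 2 1 = 0 := rfl
@[simp] lemma a6_22 : alpha6 2 2 = 1 := rfl
@[simp] lemma a6_30 : alpha6 3 0 = 1 := rfl
@[simp] lemma a6_31 : alpha6 3 1 = 1 := rfl
@[simp] lemma a6_32 : alpha6 3 2 = 0 := rfl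
@[simp] lemma a6_40 : alpha6 4 0 = 0 := rfl
@[simp] lemma a6_41 : alpha6 4 1 = 1 := rfl
@[simp] lemma a6_42 : alpha6 4 2 = 1 := rfl
@[simp] lemma a6_50 : alpha6 5 0 = 1 := rfl
@[simp] lemma a6_51 : alpha6 5 1 = 1 := rfl
@[simp] lemma a6_52 : alpha6 5 2 = 1 := rfl

lemma sum_alpha6 (l : Fin 6 → ℝ) (j : Fin 3) :
    ∑ k, l k * alpha6 k j = ![l 0 + l 3 + l 5, l 1 + l 3 + l 4 + l 5, l 2 + l 4 + l 5] j := by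
  rw [Fin.sum_univ_six]
  fin_cases j
  · show l 0 * 1 + l 1 * 0 + l 2 * 0 + l 3 * 1 + l 4 * 0 + l 5 * 1 = l 0 + l 3 + l 5
    ring
  · show l 0 * 0 + l 1 * 1 + l 2 * 0 + l 3 * 1 + l 4 * 1 + l 5 * 1 = l 1 + l 3 + l 4 + l 5
    ring
  · show l 0 * 0 + l 1 * 0 + l 2 * 1 + l 3 * 0 + l 4 * 1 + l 5 * 1 = l 2 + l 4 + l 5
    ring

lemma mem_Lambda6 {i : Fin 6} {l : Fin 6 → ℝ} (S : Finset (Fin 6)) (hS : S.card ≤ 3)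
    (hz : ∀ k ∉ S, l k = 0)
    (h0 : l 0 + l 3 + l 5 = alpha6 i 0) (h1 : l 1 + l 3 + l 4 + l 5 = alpha6 i 1)
    (h2 : l 2 + l 4 + l 5 = alpha6 i 2)
    (hu : ∀ l' : Fin 6 → ℝ, (∀ k ∉ S, l' k = 0) → l' 0 + l' 3 + l' 5 = alpha6 i 0 →
      l' 1 + l' 3 + l' 4 + l' 5 = alpha6 i 1 → l' 2 + l' 4 + l' 5 = alpha6 i 2 → l' = l) :
    l ∈ Lambda alpha6 i := by
  refine ⟨S, hS, hz, ?_, ?_⟩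
  · intro j
    rw [sum_alpha6]
    fin_cases j
    · exact h0
    · exact h1
    · exact h2
  · intro l' hz' heq
    have e0 := heq 0; rw [sum_alpha6 l' 0] at e0
    have e1 := heq 1; rw [sum_alpha6 l' 1] at e1
    have e2 := heq 2; rw [sum_alpha6 l' 2] at e2
    exact hu l' hz' e0 e1 e2


lemma lam01 : (![0,-1,0,1,0,0] : Fin 6 → ℝ) ∈ Lambda alpha6 0 := by
  refine mem_Lambda6 ({1,3} : Finset (Fin 6)) (by decide) ?_ (by show (0:ℝ) + 1 + 0 = 1; norm_num) (by show (-1:ℝ) + 1 + 0 + 0 = 0; norm_num) (by show (0:ℝ) + 0 + 0 = 0; norm_num) ?_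
  · intro k hk
    fin_cases k
    · rfl
    · exact absurd (by decide) hk
    · rfl
    · exact absurd (by decide) hk
    · rfl
    · rfl
  · intro l' hz' e0 e1 e2
    norm_num at e0 e1 e2
    have z0 := hz' 0 (by decide)
    have z2 := hz' 2 (by decide)
    have z4 := hz' 4 (by decide)
    have z5 := hz' 5 (by decide)
    funext k
    fin_cases k
    · show l' 0 = (0:ℝ); linarith
    · show l' 1 = (-1:ℝ); linarith
    · show l' 2 = (0:ℝ); linarith
    · show l' 3 = (1:ℝ); linarith
    · show l' 4 = (0:ℝ); linarith
    · show l' 5 = (0:ℝ); linarith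

lemma lam02 : (![0,0,1,1,-1,0] : Fin 6 → ℝ) ∈ Lambda alpha6 0 := by
  refine mem_Lambda6 ({2,3,4} : Finset (Fin 6)) (by decide) ?_ (by show (0:ℝ) + 1 + 0 = 1; norm_num) (by show (0:ℝ) + 1 + -1 + 0 = 0; norm_num) (by show (1:ℝ) + -1 + 0 = 0; norm_num) ?_
  · intro k hk
    fin_cases k
    · rfl
    · rfl
    · exact absurd (by decide) hk
    · exact absurd (by decide) hk
    · exact absurd (by decide) hk
    · rfl
  · intro l' hz' e0 e1 e2
    norm_num at e0 e1 e2
    have z0 := hz' 0 (by decide)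
    have z1 := hz' 1 (by decide)
    have z5 := hz' 5 (by decide)
    funext k
    fin_cases k
    · show l' 0 = (0:ℝ); linarith
    · show l' 1 = (0:ℝ); linarith
    · show l' 2 = (1:ℝ); linarith
    · show l' 3 = (1:ℝ); linarith
    · show l' 4 = (-1:ℝ); linarith
    · show l' 5 = (0:ℝ); linarith

lemma lam03 : (![0,-1,-1,0,0,1] : Fin 6 → ℝ) ∈ Lambda alpha6 0 := by
  refine mem_Lambda6 ({1,2,5} : Finset (Fin 6)) (by decide) ?_ (by show (0:ℝ) + 0 + 1 = 1; norm_num) (by show (-1:ℝ) + 0 + 0 + 1 = 0; norm_num) (by show (-1:ℝ) + 0 + 1 = 0; norm_num) ?_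
  · intro k hk
    fin_cases k
    · rfl
    · exact absurd (by decide) hk
    · exact absurd (by decide) hk
    · rfl
    · rfl
    · exact absurd (by decide) hk
  · intro l' hz' e0 e1 e2
    norm_num at e0 e1 e2
    have z0 := hz' 0 (by decide)
    have z3 := hz' 3 (by decide)
    have z4 := hz' 4 (by decide)
    funext k
    fin_cases k
    · show l' 0 = (0:ℝ); linarith
    · show l' 1 = (-1:ℝ); linarith
    · show l' 2 = (-1:ℝ); linarith
    · show l' 3 = (0:ℝ); linarith
    · show l' 4 = (0:ℝ); linarith
    · show l' 5 = (1:ℝ); linarith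

lemma lam04 : (![0,0,0,0,-1,1] : Fin 6 → ℝ) ∈ Lambda alpha6 0 := by
  refine mem_Lambda6 ({4,5} : Finset (Fin 6)) (by decide) ?_ (by show (0:ℝ) + 0 + 1 = 1; norm_num) (by show (0:ℝ) + 0 + -1 + 1 = 0; norm_num) (by show (0:ℝ) + -1 + 1 = 0; norm_num) ?_
  · intro k hk
    fin_cases k
    · rfl
    · rfl
    · rfl
    · rfl
    · exact absurd (by decide) hk
    · exact absurd (by decide) hk
  · intro l' hz' e0 e1 e2
    norm_num at e0 e1 e2
    have z0 := hz' 0 (by decide)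
    have z1 := hz' 1 (by decide)
    have z2 := hz' 2 (by decide)
    have z3 := hz' 3 (by decide)
    funext k
    fin_cases k
    · show l' 0 = (0:ℝ); linarith
    · show l' 1 = (0:ℝ); linarith
    · show l' 2 = (0:ℝ); linarith
    · show l' 3 = (0:ℝ); linarith
    · show l' 4 = (-1:ℝ); linarith
    · show l' 5 = (1:ℝ); linarith

lemma lam11 : (![0,0,-1,0,1,0] : Fin 6 → ℝ) ∈ Lambda alpha6 1 := by
  refine mem_Lambda6 ({2,4} : Finset (Fin 6)) (by decide) ?_ (by show (0:ℝ) + 0 + 0 = 0; norm_num) (by show (0:ℝ) + 0 + 1 + 0 = 1; norm_num) (by show (-1:ℝ) + 1 + 0 = 0; norm_num) ?_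
  · intro k hk
    fin_cases k
    · rfl
    · rfl
    · exact absurd (by decide) hk
    · rfl
    · exact absurd (by decide) hk
    · rfl
  · intro l' hz' e0 e1 e2
    norm_num at e0 e1 e2
    have z0 := hz' 0 (by decide)
    have z1 := hz' 1 (by decide)
    have z3 := hz' 3 (by decide)
    have z5 := hz' 5 (by decide)
    funext k
    fin_cases k
    · show l' 0 = (0:ℝ); linarith
    · show l' 1 = (0:ℝ); linarith
    · show l' 2 = (-1:ℝ); linarith
    · show l' 3 = (0:ℝ); linarith
    · show l' 4 = (1:ℝ); linarith
    · show l' 5 = (0:ℝ); linarith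

lemma lam12 : (![-1,0,0,1,0,0] : Fin 6 → ℝ) ∈ Lambda alpha6 1 := by
  refine mem_Lambda6 ({0,3} : Finset (Fin 6)) (by decide) ?_ (by show (-1:ℝ) + 1 + 0 = 0; norm_num) (by show (0:ℝ) + 1 + 0 + 0 = 1; norm_num) (by show (0:ℝ) + 0 + 0 = 0; norm_num) ?_
  · intro k hk
    fin_cases k
    · exact absurd (by decide) hk
    · rfl
    · rfl
    · exact absurd (by decide) hk
    · rfl
    · rfl
  · intro l' hz' e0 e1 e2
    norm_num at e0 e1 e2
    have z1 := hz' 1 (by decide)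
    have z2 := hz' 2 (by decide)
    have z4 := hz' 4 (by decide)
    have z5 := hz' 5 (by decide)
    funext k
    fin_cases k
    · show l' 0 = (-1:ℝ); linarith
    · show l' 1 = (0:ℝ); linarith
    · show l' 2 = (0:ℝ); linarith
    · show l' 3 = (1:ℝ); linarith
    · show l' 4 = (0:ℝ); linarith
    · show l' 5 = (0:ℝ); linarith

lemma lam13 : (![-1,0,-1,0,0,1] : Fin 6 → ℝ) ∈ Lambda alpha6 1 := by
  refine mem_Lambda6 ({0,2,5} : Finset (Fin 6)) (by decide) ?_ (by show (-1:ℝ) + 0 + 1 = 0; norm_num) (by show (0:ℝ) + 0 + 0 + 1 = 1; norm_num) (by show (-1:ℝ) + 0 + 1 = 0; norm_num) ?_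
  · intro k hk
    fin_cases k
    · exact absurd (by decide) hk
    · rfl
    · exact absurd (by decide) hk
    · rfl
    · rfl
    · exact absurd (by decide) hk
  · intro l' hz' e0 e1 e2
    norm_num at e0 e1 e2
    have z1 := hz' 1 (by decide)
    have z3 := hz' 3 (by decide)
    have z4 := hz' 4 (by decide)
    funext k
    fin_cases k
    · show l' 0 = (-1:ℝ); linarith
    · show l' 1 = (0:ℝ); linarith
    · show l' 2 = (-1:ℝ); linarith
    · show l' 3 = (0:ℝ); linarith
    · show l' 4 = (0:ℝ); linarith
    · show l' 5 = (1:ℝ); linarith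

lemma lam14 : (![0,0,0,1,1,-1] : Fin 6 → ℝ) ∈ Lambda alpha6 1 := by
  refine mem_Lambda6 ({3,4,5} : Finset (Fin 6)) (by decide) ?_ (by show (0:ℝ) + 1 + -1 = 0; norm_num) (by show (0:ℝ) + 1 + 1 + -1 = 1; norm_num) (by show (0:ℝ) + 1 + -1 = 0; norm_num) ?_
  · intro k hk
    fin_cases k
    · rfl
    · rfl
    · rfl
    · exact absurd (by decide) hk
    · exact absurd (by decide) hk
    · exact absurd (by decide) hk
  · intro l' hz' e0 e1 e2
    norm_num at e0 e1 e2
    have z0 := hz' 0 (by decide)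
    have z1 := hz' 1 (by decide)
    have z2 := hz' 2 (by decide)
    funext k
    fin_cases k
    · show l' 0 = (0:ℝ); linarith
    · show l' 1 = (0:ℝ); linarith
    · show l' 2 = (0:ℝ); linarith
    · show l' 3 = (1:ℝ); linarith
    · show l' 4 = (1:ℝ); linarith
    · show l' 5 = (-1:ℝ); linarith

lemma lam21 : (![0,-1,0,0,1,0] : Fin 6 → ℝ) ∈ Lambda alpha6 2 := by
  refine mem_Lambda6 ({1,4} : Finset (Fin 6)) (by decide) ?_ (by show (0:ℝ) + 0 + 0 = 0; norm_num) (by show (-1:ℝ) + 0 + 1 + 0 = 0; norm_num) (by show (0:ℝ) + 1 + 0 = 1; norm_num) ?_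
  · intro k hk
    fin_cases k
    · rfl
    · exact absurd (by decide) hk
    · rfl
    · rfl
    · exact absurd (by decide) hk
    · rfl
  · intro l' hz' e0 e1 e2
    norm_num at e0 e1 e2
    have z0 := hz' 0 (by decide)
    have z2 := hz' 2 (by decide)
    have z3 := hz' 3 (by decide)
    have z5 := hz' 5 (by decide)
    funext k
    fin_cases k
    · show l' 0 = (0:ℝ); linarith
    · show l' 1 = (-1:ℝ); linarith
    · show l' 2 = (0:ℝ); linarith
    · show l' 3 = (0:ℝ); linarith
    · show l' 4 = (1:ℝ); linarith
    · show l' 5 = (0:ℝ); linarith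

lemma lam22 : (![0,0,0,-1,0,1] : Fin 6 → ℝ) ∈ Lambda alpha6 2 := by
  refine mem_Lambda6 ({3,5} : Finset (Fin 6)) (by decide) ?_ (by show (0:ℝ) + -1 + 1 = 0; norm_num) (by show (0:ℝ) + -1 + 0 + 1 = 0; norm_num) (by show (0:ℝ) + 0 + 1 = 1; norm_num) ?_
  · intro k hk
    fin_cases k
    · rfl
    · rfl
    · rfl
    · exact absurd (by decide) hk
    · rfl
    · exact absurd (by decide) hk
  · intro l' hz' e0 e1 e2
    norm_num at e0 e1 e2
    have z0 := hz' 0 (by decide)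
    have z1 := hz' 1 (by decide)
    have z2 := hz' 2 (by decide)
    have z4 := hz' 4 (by decide)
    funext k
    fin_cases k
    · show l' 0 = (0:ℝ); linarith
    · show l' 1 = (0:ℝ); linarith
    · show l' 2 = (0:ℝ); linarith
    · show l' 3 = (-1:ℝ); linarith
    · show l' 4 = (0:ℝ); linarith
    · show l' 5 = (1:ℝ); linarith

lemma lam23 : (![-1,-1,0,0,0,1] : Fin 6 → ℝ) ∈ Lambda alpha6 2 := by
  refine mem_Lambda6 ({0,1,5} : Finset (Fin 6)) (by decide) ?_ (by show (-1:ℝ) + 0 + 1 = 0; norm_num) (by show (-1:ℝ) + 0 + 0 + 1 = 0; norm_num) (by show (0:ℝ) + 0 + 1 = 1; norm_num) ?_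
  · intro k hk
    fin_cases k
    · exact absurd (by decide) hk
    · exact absurd (by decide) hk
    · rfl
    · rfl
    · rfl
    · exact absurd (by decide) hk
  · intro l' hz' e0 e1 e2
    norm_num at e0 e1 e2
    have z2 := hz' 2 (by decide)
    have z3 := hz' 3 (by decide)
    have z4 := hz' 4 (by decide)
    funext k
    fin_cases k
    · show l' 0 = (-1:ℝ); linarith
    · show l' 1 = (-1:ℝ); linarith
    · show l' 2 = (0:ℝ); linarith
    · show l' 3 = (0:ℝ); linarith
    · show l' 4 = (0:ℝ); linarith
    · show l' 5 = (1:ℝ); linarith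

lemma lam24 : (![1,0,0,-1,1,0] : Fin 6 → ℝ) ∈ Lambda alpha6 2 := by
  refine mem_Lambda6 ({0,3,4} : Finset (Fin 6)) (by decide) ?_ (by show (1:ℝ) + -1 + 0 = 0; norm_num) (by show (0:ℝ) + -1 + 1 + 0 = 0; norm_num) (by show (0:ℝ) + 1 + 0 = 1; norm_num) ?_
  · intro k hk
    fin_cases k
    · exact absurd (by decide) hk
    · rfl
    · rfl
    · exact absurd (by decide) hk
    · exact absurd (by decide) hk
    · rfl
  · intro l' hz' e0 e1 e2
    norm_num at e0 e1 e2
    have z1 := hz' 1 (by decide)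
    have z2 := hz' 2 (by decide)
    have z5 := hz' 5 (by decide)
    funext k
    fin_cases k
    · show l' 0 = (1:ℝ); linarith
    · show l' 1 = (0:ℝ); linarith
    · show l' 2 = (0:ℝ); linarith
    · show l' 3 = (-1:ℝ); linarith
    · show l' 4 = (1:ℝ); linarith
    · show l' 5 = (0:ℝ); linarith

lemma lam31 : (![0,0,-1,0,0,1] : Fin 6 → ℝ) ∈ Lambda alpha6 3 := by
  refine mem_Lambda6 ({2,5} : Finset (Fin 6)) (by decide) ?_ (by show (0:ℝ) + 0 + 1 = 1; norm_num) (by show (0:ℝ) + 0 + 0 + 1 = 1; norm_num) (by show (-1:ℝ) + 0 + 1 = 0; norm_num) ?_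
  · intro k hk
    fin_cases k
    · rfl
    · rfl
    · exact absurd (by decide) hk
    · rfl
    · rfl
    · exact absurd (by decide) hk
  · intro l' hz' e0 e1 e2
    norm_num at e0 e1 e2
    have z0 := hz' 0 (by decide)
    have z1 := hz' 1 (by decide)
    have z3 := hz' 3 (by decide)
    have z4 := hz' 4 (by decide)
    funext k
    fin_cases k
    · show l' 0 = (0:ℝ); linarith
    · show l' 1 = (0:ℝ); linarith
    · show l' 2 = (-1:ℝ); linarith
    · show l' 3 = (0:ℝ); linarith
    · show l' 4 = (0:ℝ); linarith
    · show l' 5 = (1:ℝ); linarith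

lemma lam32 : (![1,1,0,0,0,0] : Fin 6 → ℝ) ∈ Lambda alpha6 3 := by
  refine mem_Lambda6 ({0,1} : Finset (Fin 6)) (by decide) ?_ (by show (1:ℝ) + 0 + 0 = 1; norm_num) (by show (1:ℝ) + 0 + 0 + 0 = 1; norm_num) (by show (0:ℝ) + 0 + 0 = 0; norm_num) ?_
  · intro k hk
    fin_cases k
    · exact absurd (by decide) hk
    · exact absurd (by decide) hk
    · rfl
    · rfl
    · rfl
    · rfl
  · intro l' hz' e0 e1 e2
    norm_num at e0 e1 e2
    have z2 := hz' 2 (by decide)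
    have z3 := hz' 3 (by decide)
    have z4 := hz' 4 (by decide)
    have z5 := hz' 5 (by decide)
    funext k
    fin_cases k
    · show l' 0 = (1:ℝ); linarith
    · show l' 1 = (1:ℝ); linarith
    · show l' 2 = (0:ℝ); linarith
    · show l' 3 = (0:ℝ); linarith
    · show l' 4 = (0:ℝ); linarith
    · show l' 5 = (0:ℝ); linarith

lemma lam33 : (![1,0,-1,0,1,0] : Fin 6 → ℝ) ∈ Lambda alpha6 3 := by
  refine mem_Lambda6 ({0,2,4} : Finset (Fin 6)) (by decide) ?_ (by show (1:ℝ) + 0 + 0 = 1; norm_num) (by show (0:ℝ) + 0 + 1 + 0 = 1; norm_num) (by show (-1:ℝ) + 1 + 0 = 0; norm_num) ?_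
  · intro k hk
    fin_cases k
    · exact absurd (by decide) hk
    · rfl
    · exact absurd (by decide) hk
    · rfl
    · exact absurd (by decide) hk
    · rfl
  · intro l' hz' e0 e1 e2
    norm_num at e0 e1 e2
    have z1 := hz' 1 (by decide)
    have z3 := hz' 3 (by decide)
    have z5 := hz' 5 (by decide)
    funext k
    fin_cases k
    · show l' 0 = (1:ℝ); linarith
    · show l' 1 = (0:ℝ); linarith
    · show l' 2 = (-1:ℝ); linarith
    · show l' 3 = (0:ℝ); linarith
    · show l' 4 = (1:ℝ); linarith
    · show l' 5 = (0:ℝ); linarith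

lemma lam34 : (![0,1,0,0,-1,1] : Fin 6 → ℝ) ∈ Lambda alpha6 3 := by
  refine mem_Lambda6 ({1,4,5} : Finset (Fin 6)) (by decide) ?_ (by show (0:ℝ) + 0 + 1 = 1; norm_num) (by show (1:ℝ) + 0 + -1 + 1 = 1; norm_num) (by show (0:ℝ) + -1 + 1 = 0; norm_num) ?_
  · intro k hk
    fin_cases k
    · rfl
    · exact absurd (by decide) hk
    · rfl
    · rfl
    · exact absurd (by decide) hk
    · exact absurd (by decide) hk
  · intro l' hz' e0 e1 e2
    norm_num at e0 e1 e2
    have z0 := hz' 0 (by decide)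
    have z2 := hz' 2 (by decide)
    have z3 := hz' 3 (by decide)
    funext k
    fin_cases k
    · show l' 0 = (0:ℝ); linarith
    · show l' 1 = (1:ℝ); linarith
    · show l' 2 = (0:ℝ); linarith
    · show l' 3 = (0:ℝ); linarith
    · show l' 4 = (-1:ℝ); linarith
    · show l' 5 = (1:ℝ); linarith

lemma lam41 : (![-1,0,0,0,0,1] : Fin 6 → ℝ) ∈ Lambda alpha6 4 := by
  refine mem_Lambda6 ({0,5} : Finset (Fin 6)) (by decide) ?_ (by show (-1:ℝ) + 0 + 1 = 0; norm_num) (by show (0:ℝ) + 0 + 0 + 1 = 1; norm_num) (by show (0:ℝ) + 0 + 1 = 1; norm_num) ?_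
  · intro k hk
    fin_cases k
    · exact absurd (by decide) hk
    · rfl
    · rfl
    · rfl
    · rfl
    · exact absurd (by decide) hk
  · intro l' hz' e0 e1 e2
    norm_num at e0 e1 e2
    have z1 := hz' 1 (by decide)
    have z2 := hz' 2 (by decide)
    have z3 := hz' 3 (by decide)
    have z4 := hz' 4 (by decide)
    funext k
    fin_cases k
    · show l' 0 = (-1:ℝ); linarith
    · show l' 1 = (0:ℝ); linarith
    · show l' 2 = (0:ℝ); linarith
    · show l' 3 = (0:ℝ); linarith
    · show l' 4 = (0:ℝ); linarith
    · show l' 5 = (1:ℝ); linarith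

lemma lam42 : (![0,1,1,0,0,0] : Fin 6 → ℝ) ∈ Lambda alpha6 4 := by
  refine mem_Lambda6 ({1,2} : Finset (Fin 6)) (by decide) ?_ (by show (0:ℝ) + 0 + 0 = 0; norm_num) (by show (1:ℝ) + 0 + 0 + 0 = 1; norm_num) (by show (1:ℝ) + 0 + 0 = 1; norm_num) ?_
  · intro k hk
    fin_cases k
    · rfl
    · exact absurd (by decide) hk
    · exact absurd (by decide) hk
    · rfl
    · rfl
    · rfl
  · intro l' hz' e0 e1 e2
    norm_num at e0 e1 e2
    have z0 := hz' 0 (by decide)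
    have z3 := hz' 3 (by decide)
    have z4 := hz' 4 (by decide)
    have z5 := hz' 5 (by decide)
    funext k
    fin_cases k
    · show l' 0 = (0:ℝ); linarith
    · show l' 1 = (1:ℝ); linarith
    · show l' 2 = (1:ℝ); linarith
    · show l' 3 = (0:ℝ); linarith
    · show l' 4 = (0:ℝ); linarith
    · show l' 5 = (0:ℝ); linarith

lemma lam43 : (![-1,0,1,1,0,0] : Fin 6 → ℝ) ∈ Lambda alpha6 4 := by
  refine mem_Lambda6 ({0,2,3} : Finset (Fin 6)) (by decide) ?_ (by show (-1:ℝ) + 1 + 0 = 0; norm_num) (by show (0:ℝ) + 1 + 0 + 0 = 1; norm_num) (by show (1:ℝ) + 0 + 0 = 1; norm_num) ?_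
  · intro k hk
    fin_cases k
    · exact absurd (by decide) hk
    · rfl
    · exact absurd (by decide) hk
    · exact absurd (by decide) hk
    · rfl
    · rfl
  · intro l' hz' e0 e1 e2
    norm_num at e0 e1 e2
    have z1 := hz' 1 (by decide)
    have z4 := hz' 4 (by decide)
    have z5 := hz' 5 (by decide)
    funext k
    fin_cases k
    · show l' 0 = (-1:ℝ); linarith
    · show l' 1 = (0:ℝ); linarith
    · show l' 2 = (1:ℝ); linarith
    · show l' 3 = (1:ℝ); linarith
    · show l' 4 = (0:ℝ); linarith
    · show l' 5 = (0:ℝ); linarith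

lemma lam44 : (![0,1,0,-1,0,1] : Fin 6 → ℝ) ∈ Lambda alpha6 4 := by
  refine mem_Lambda6 ({1,3,5} : Finset (Fin 6)) (by decide) ?_ (by show (0:ℝ) + -1 + 1 = 0; norm_num) (by show (1:ℝ) + -1 + 0 + 1 = 1; norm_num) (by show (0:ℝ) + 0 + 1 = 1; norm_num) ?_
  · intro k hk
    fin_cases k
    · rfl
    · exact absurd (by decide) hk
    · rfl
    · exact absurd (by decide) hk
    · rfl
    · exact absurd (by decide) hk
  · intro l' hz' e0 e1 e2
    norm_num at e0 e1 e2
    have z0 := hz' 0 (by decide)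
    have z2 := hz' 2 (by decide)
    have z4 := hz' 4 (by decide)
    funext k
    fin_cases k
    · show l' 0 = (0:ℝ); linarith
    · show l' 1 = (1:ℝ); linarith
    · show l' 2 = (0:ℝ); linarith
    · show l' 3 = (-1:ℝ); linarith
    · show l' 4 = (0:ℝ); linarith
    · show l' 5 = (1:ℝ); linarith

lemma lam51 : (![0,0,1,1,0,0] : Fin 6 → ℝ) ∈ Lambda alpha6 5 := by
  refine mem_Lambda6 ({2,3} : Finset (Fin 6)) (by decide) ?_ (by show (0:ℝ) + 1 + 0 = 1; norm_num) (by show (0:ℝ) + 1 + 0 + 0 = 1; norm_num) (by show (1:ℝ) + 0 + 0 = 1; norm_num) ?_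
  · intro k hk
    fin_cases k
    · rfl
    · rfl
    · exact absurd (by decide) hk
    · exact absurd (by decide) hk
    · rfl
    · rfl
  · intro l' hz' e0 e1 e2
    norm_num at e0 e1 e2
    have z0 := hz' 0 (by decide)
    have z1 := hz' 1 (by decide)
    have z4 := hz' 4 (by decide)
    have z5 := hz' 5 (by decide)
    funext k
    fin_cases k
    · show l' 0 = (0:ℝ); linarith
    · show l' 1 = (0:ℝ); linarith
    · show l' 2 = (1:ℝ); linarith
    · show l' 3 = (1:ℝ); linarith
    · show l' 4 = (0:ℝ); linarith
    · show l' 5 = (0:ℝ); linarith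

lemma lam52 : (![1,0,0,0,1,0] : Fin 6 → ℝ) ∈ Lambda alpha6 5 := by
  refine mem_Lambda6 ({0,4} : Finset (Fin 6)) (by decide) ?_ (by show (1:ℝ) + 0 + 0 = 1; norm_num) (by show (0:ℝ) + 0 + 1 + 0 = 1; norm_num) (by show (0:ℝ) + 1 + 0 = 1; norm_num) ?_
  · intro k hk
    fin_cases k
    · exact absurd (by decide) hk
    · rfl
    · rfl
    · rfl
    · exact absurd (by decide) hk
    · rfl
  · intro l' hz' e0 e1 e2
    norm_num at e0 e1 e2
    have z1 := hz' 1 (by decide)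
    have z2 := hz' 2 (by decide)
    have z3 := hz' 3 (by decide)
    have z5 := hz' 5 (by decide)
    funext k
    fin_cases k
    · show l' 0 = (1:ℝ); linarith
    · show l' 1 = (0:ℝ); linarith
    · show l' 2 = (0:ℝ); linarith
    · show l' 3 = (0:ℝ); linarith
    · show l' 4 = (1:ℝ); linarith
    · show l' 5 = (0:ℝ); linarith

lemma lam53 : (![1,1,1,0,0,0] : Fin 6 → ℝ) ∈ Lambda alpha6 5 := by
  refine mem_Lambda6 ({0,1,2} : Finset (Fin 6)) (by decide) ?_ (by show (1:ℝ) + 0 + 0 = 1; norm_num) (by show (1:ℝ) + 0 + 0 + 0 = 1; norm_num) (by show (1:ℝ) + 0 + 0 = 1; norm_num) ?_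
  · intro k hk
    fin_cases k
    · exact absurd (by decide) hk
    · exact absurd (by decide) hk
    · exact absurd (by decide) hk
    · rfl
    · rfl
    · rfl
  · intro l' hz' e0 e1 e2
    norm_num at e0 e1 e2
    have z3 := hz' 3 (by decide)
    have z4 := hz' 4 (by decide)
    have z5 := hz' 5 (by decide)
    funext k
    fin_cases k
    · show l' 0 = (1:ℝ); linarith
    · show l' 1 = (1:ℝ); linarith
    · show l' 2 = (1:ℝ); linarith
    · show l' 3 = (0:ℝ); linarith
    · show l' 4 = (0:ℝ); linarith
    · show l' 5 = (0:ℝ); linarith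

lemma lam54 : (![0,-1,0,1,1,0] : Fin 6 → ℝ) ∈ Lambda alpha6 5 := by
  refine mem_Lambda6 ({1,3,4} : Finset (Fin 6)) (by decide) ?_ (by show (0:ℝ) + 1 + 0 = 1; norm_num) (by show (-1:ℝ) + 1 + 1 + 0 = 1; norm_num) (by show (0:ℝ) + 1 + 0 = 1; norm_num) ?_
  · intro k hk
    fin_cases k
    · rfl
    · exact absurd (by decide) hk
    · rfl
    · exact absurd (by decide) hk
    · exact absurd (by decide) hk
    · rfl
  · intro l' hz' e0 e1 e2
    norm_num at e0 e1 e2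
    have z0 := hz' 0 (by decide)
    have z2 := hz' 2 (by decide)
    have z5 := hz' 5 (by decide)
    funext k
    fin_cases k
    · show l' 0 = (0:ℝ); linarith
    · show l' 1 = (-1:ℝ); linarith
    · show l' 2 = (0:ℝ); linarith
    · show l' 3 = (1:ℝ); linarith
    · show l' 4 = (1:ℝ); linarith
    · show l' 5 = (0:ℝ); linarith

lemma proj0 (m : CM 6) (hopt : m = Opt alpha6 m) {y : Fin 3 → ℝ} (hy : y ∈ PolySet alpha6 m)
    (t : ℝ) (ht1 : m.1 0 < t) (ht2 : t < m.2 0) :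
    ∃ x ∈ PolySet alpha6 m, x 0 = t := by
  have hL1 := opt_low hopt hy lam01
  have hU1 := opt_high hopt hy lam01
  have hL2 := opt_low hopt hy lam02
  have hU2 := opt_high hopt hy lam02
  have hL3 := opt_low hopt hy lam03
  have hU3 := opt_high hopt hy lam03
  have hL4 := opt_low hopt hy lam04
  have hU4 := opt_high hopt hy lam04
  norm_num [Fin.sum_univ_six, eLow] at hL1 hL2 hL3 hL4
  norm_num [Fin.sum_univ_six, eHigh] at hU1 hU2 hU3 hU4
  have hy' := mem_poly.mp hy
  obtain ⟨⟨hy0a, hy0b⟩, ⟨hy1a, hy1b⟩, ⟨hy2a, hy2b⟩, ⟨hy3a, hy3b⟩, ⟨hy4a, hy4b⟩, ⟨hy5a, hy5b⟩⟩ := hy'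
  set A := max (max (m.1 1) (m.1 3 - t)) (max (m.1 4 - m.2 2) (m.1 5 - t - m.2 2)) with hAdef
  set B := min (min (m.2 1) (m.2 3 - t)) (min (m.2 4 - m.1 2) (m.2 5 - t - m.1 2)) with hBdef
  have hA1 : m.1 1 ≤ A := le_max_of_le_left (le_max_left _ _)
  have hA2 : m.1 3 - t ≤ A := le_max_of_le_left (le_max_right _ _)
  have hA3 : m.1 4 - m.2 2 ≤ A := le_max_of_le_right (le_max_left _ _)
  have hA4 : m.1 5 - t - m.2 2 ≤ A := le_max_of_le_right (le_max_right _ _)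
  have hB1 : B ≤ m.2 1 := min_le_of_left_le (min_le_left _ _)
  have hB2 : B ≤ m.2 3 - t := min_le_of_left_le (min_le_right _ _)
  have hB3 : B ≤ m.2 4 - m.1 2 := min_le_of_right_le (min_le_left _ _)
  have hB4 : B ≤ m.2 5 - t - m.1 2 := min_le_of_right_le (min_le_right _ _)
  have hAB : A < B := by
    rw [hAdef, hBdef]
    refine max_lt (max_lt ?_ ?_) (max_lt ?_ ?_) <;>
      refine lt_min (lt_min ?_ ?_) (lt_min ?_ ?_) <;> linarith
  set u := (A + B) / 2 with hudef
  have huA : A < u := by rw [hudef]; linarith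
  have huB : u < B := by rw [hudef]; linarith
  set C := max (m.1 2) (max (m.1 4 - u) (m.1 5 - t - u)) with hCdef
  set D := min (m.2 2) (min (m.2 4 - u) (m.2 5 - t - u)) with hDdef
  have hC1 : m.1 2 ≤ C := le_max_left _ _
  have hC2 : m.1 4 - u ≤ C := le_max_of_le_right (le_max_left _ _)
  have hC3 : m.1 5 - t - u ≤ C := le_max_of_le_right (le_max_right _ _)
  have hD1 : D ≤ m.2 2 := min_le_left _ _
  have hD2 : D ≤ m.2 4 - u := min_le_of_right_le (min_le_left _ _)
  have hD3 : D ≤ m.2 5 - t - u := min_le_of_right_le (min_le_right _ _)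
  have hCD : C < D := by
    rw [hCdef, hDdef]
    refine max_lt ?_ (max_lt ?_ ?_) <;>
      refine lt_min ?_ (lt_min ?_ ?_) <;> linarith
  set v := (C + D) / 2 with hvdef
  have hvC : C < v := by rw [hvdef]; linarith
  have hvD : v < D := by rw [hvdef]; linarith
  refine ⟨![t,u,v], ?_, by show t = t; ring⟩
  rw [mem_poly]
  refine ⟨⟨?_, ?_⟩, ⟨?_, ?_⟩, ⟨?_, ?_⟩, ⟨?_, ?_⟩, ⟨?_, ?_⟩, ⟨?_, ?_⟩⟩
  · show m.1 0 < t; linarith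
  · show t < m.2 0; linarith
  · show m.1 1 < u; linarith
  · show u < m.2 1; linarith
  · show m.1 2 < v; linarith
  · show v < m.2 2; linarith
  · show m.1 3 < t + u; linarith
  · show t + u < m.2 3; linarith
  · show m.1 4 < u + v; linarith
  · show u + v < m.2 4; linarith
  · show m.1 5 < t + u + v; linarith
  · show t + u + v < m.2 5; linarith

lemma proj1 (m : CM 6) (hopt : m = Opt alpha6 m) {y : Fin 3 → ℝ} (hy : y ∈ PolySet alpha6 m)
    (t : ℝ) (ht1 : m.1 1 < t) (ht2 : t < m.2 1) :
    ∃ x ∈ PolySet alpha6 m, x 1 = t := by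
  have hL1 := opt_low hopt hy lam11
  have hU1 := opt_high hopt hy lam11
  have hL2 := opt_low hopt hy lam12
  have hU2 := opt_high hopt hy lam12
  have hL3 := opt_low hopt hy lam13
  have hU3 := opt_high hopt hy lam13
  have hL4 := opt_low hopt hy lam14
  have hU4 := opt_high hopt hy lam14
  norm_num [Fin.sum_univ_six, eLow] at hL1 hL2 hL3 hL4
  norm_num [Fin.sum_univ_six, eHigh] at hU1 hU2 hU3 hU4
  have hy' := mem_poly.mp hy
  obtain ⟨⟨hy0a, hy0b⟩, ⟨hy1a, hy1b⟩, ⟨hy2a, hy2b⟩, ⟨hy3a, hy3b⟩, ⟨hy4a, hy4b⟩, ⟨hy5a, hy5b⟩⟩ := hy'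
  set A := max (max (m.1 0) (m.1 3 - t)) (max (m.1 5 - t - m.2 2) (m.1 5 - m.2 4)) with hAdef
  set B := min (min (m.2 0) (m.2 3 - t)) (min (m.2 5 - t - m.1 2) (m.2 5 - m.1 4)) with hBdef
  have hA1 : m.1 0 ≤ A := le_max_of_le_left (le_max_left _ _)
  have hA2 : m.1 3 - t ≤ A := le_max_of_le_left (le_max_right _ _)
  have hA3 : m.1 5 - t - m.2 2 ≤ A := le_max_of_le_right (le_max_left _ _)
  have hA4 : m.1 5 - m.2 4 ≤ A := le_max_of_le_right (le_max_right _ _)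
  have hB1 : B ≤ m.2 0 := min_le_of_left_le (min_le_left _ _)
  have hB2 : B ≤ m.2 3 - t := min_le_of_left_le (min_le_right _ _)
  have hB3 : B ≤ m.2 5 - t - m.1 2 := min_le_of_right_le (min_le_left _ _)
  have hB4 : B ≤ m.2 5 - m.1 4 := min_le_of_right_le (min_le_right _ _)
  have hAB : A < B := by
    rw [hAdef, hBdef]
    refine max_lt (max_lt ?_ ?_) (max_lt ?_ ?_) <;>
      refine lt_min (lt_min ?_ ?_) (lt_min ?_ ?_) <;> linarith
  set u := (A + B) / 2 with hudef
  have huA : A < u := by rw [hudef]; linarith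
  have huB : u < B := by rw [hudef]; linarith
  set C := max (m.1 2) (max (m.1 4 - t) (m.1 5 - u - t)) with hCdef
  set D := min (m.2 2) (min (m.2 4 - t) (m.2 5 - u - t)) with hDdef
  have hC1 : m.1 2 ≤ C := le_max_left _ _
  have hC2 : m.1 4 - t ≤ C := le_max_of_le_right (le_max_left _ _)
  have hC3 : m.1 5 - u - t ≤ C := le_max_of_le_right (le_max_right _ _)
  have hD1 : D ≤ m.2 2 := min_le_left _ _
  have hD2 : D ≤ m.2 4 - t := min_le_of_right_le (min_le_left _ _)
  have hD3 : D ≤ m.2 5 - u - t := min_le_of_right_le (min_le_right _ _)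
  have hCD : C < D := by
    rw [hCdef, hDdef]
    refine max_lt ?_ (max_lt ?_ ?_) <;>
      refine lt_min ?_ (lt_min ?_ ?_) <;> linarith
  set v := (C + D) / 2 with hvdef
  have hvC : C < v := by rw [hvdef]; linarith
  have hvD : v < D := by rw [hvdef]; linarith
  refine ⟨![u,t,v], ?_, by show t = t; ring⟩
  rw [mem_poly]
  refine ⟨⟨?_, ?_⟩, ⟨?_, ?_⟩, ⟨?_, ?_⟩, ⟨?_, ?_⟩, ⟨?_, ?_⟩, ⟨?_, ?_⟩⟩
  · show m.1 0 < u; linarith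
  · show u < m.2 0; linarith
  · show m.1 1 < t; linarith
  · show t < m.2 1; linarith
  · show m.1 2 < v; linarith
  · show v < m.2 2; linarith
  · show m.1 3 < u + t; linarith
  · show u + t < m.2 3; linarith
  · show m.1 4 < t + v; linarith
  · show t + v < m.2 4; linarith
  · show m.1 5 < u + t + v; linarith
  · show u + t + v < m.2 5; linarith

lemma proj2 (m : CM 6) (hopt : m = Opt alpha6 m) {y : Fin 3 → ℝ} (hy : y ∈ PolySet alpha6 m)
    (t : ℝ) (ht1 : m.1 2 < t) (ht2 : t < m.2 2) :
    ∃ x ∈ PolySet alpha6 m, x 2 = t := by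
  have hL1 := opt_low hopt hy lam21
  have hU1 := opt_high hopt hy lam21
  have hL2 := opt_low hopt hy lam22
  have hU2 := opt_high hopt hy lam22
  have hL3 := opt_low hopt hy lam23
  have hU3 := opt_high hopt hy lam23
  have hL4 := opt_low hopt hy lam24
  have hU4 := opt_high hopt hy lam24
  norm_num [Fin.sum_univ_six, eLow] at hL1 hL2 hL3 hL4
  norm_num [Fin.sum_univ_six, eHigh] at hU1 hU2 hU3 hU4
  have hy' := mem_poly.mp hy
  obtain ⟨⟨hy0a, hy0b⟩, ⟨hy1a, hy1b⟩, ⟨hy2a, hy2b⟩, ⟨hy3a, hy3b⟩, ⟨hy4a, hy4b⟩, ⟨hy5a, hy5b⟩⟩ := hy'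
  set A := max (max (m.1 1) (m.1 4 - t)) (max (m.1 3 - m.2 0) (m.1 5 - t - m.2 0)) with hAdef
  set B := min (min (m.2 1) (m.2 4 - t)) (min (m.2 3 - m.1 0) (m.2 5 - t - m.1 0)) with hBdef
  have hA1 : m.1 1 ≤ A := le_max_of_le_left (le_max_left _ _)
  have hA2 : m.1 4 - t ≤ A := le_max_of_le_left (le_max_right _ _)
  have hA3 : m.1 3 - m.2 0 ≤ A := le_max_of_le_right (le_max_left _ _)
  have hA4 : m.1 5 - t - m.2 0 ≤ A := le_max_of_le_right (le_max_right _ _)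
  have hB1 : B ≤ m.2 1 := min_le_of_left_le (min_le_left _ _)
  have hB2 : B ≤ m.2 4 - t := min_le_of_left_le (min_le_right _ _)
  have hB3 : B ≤ m.2 3 - m.1 0 := min_le_of_right_le (min_le_left _ _)
  have hB4 : B ≤ m.2 5 - t - m.1 0 := min_le_of_right_le (min_le_right _ _)
  have hAB : A < B := by
    rw [hAdef, hBdef]
    refine max_lt (max_lt ?_ ?_) (max_lt ?_ ?_) <;>
      refine lt_min (lt_min ?_ ?_) (lt_min ?_ ?_) <;> linarith
  set u := (A + B) / 2 with hudef
  have huA : A < u := by rw [hudef]; linarith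
  have huB : u < B := by rw [hudef]; linarith
  set C := max (m.1 0) (max (m.1 3 - u) (m.1 5 - u - t)) with hCdef
  set D := min (m.2 0) (min (m.2 3 - u) (m.2 5 - u - t)) with hDdef
  have hC1 : m.1 0 ≤ C := le_max_left _ _
  have hC2 : m.1 3 - u ≤ C := le_max_of_le_right (le_max_left _ _)
  have hC3 : m.1 5 - u - t ≤ C := le_max_of_le_right (le_max_right _ _)
  have hD1 : D ≤ m.2 0 := min_le_left _ _
  have hD2 : D ≤ m.2 3 - u := min_le_of_right_le (min_le_left _ _)
  have hD3 : D ≤ m.2 5 - u - t := min_le_of_right_le (min_le_right _ _)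
  have hCD : C < D := by
    rw [hCdef, hDdef]
    refine max_lt ?_ (max_lt ?_ ?_) <;>
      refine lt_min ?_ (lt_min ?_ ?_) <;> linarith
  set v := (C + D) / 2 with hvdef
  have hvC : C < v := by rw [hvdef]; linarith
  have hvD : v < D := by rw [hvdef]; linarith
  refine ⟨![v,u,t], ?_, by show t = t; ring⟩
  rw [mem_poly]
  refine ⟨⟨?_, ?_⟩, ⟨?_, ?_⟩, ⟨?_, ?_⟩, ⟨?_, ?_⟩, ⟨?_, ?_⟩, ⟨?_, ?_⟩⟩
  · show m.1 0 < v; linarith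
  · show v < m.2 0; linarith
  · show m.1 1 < u; linarith
  · show u < m.2 1; linarith
  · show m.1 2 < t; linarith
  · show t < m.2 2; linarith
  · show m.1 3 < v + u; linarith
  · show v + u < m.2 3; linarith
  · show m.1 4 < u + t; linarith
  · show u + t < m.2 4; linarith
  · show m.1 5 < v + u + t; linarith
  · show v + u + t < m.2 5; linarith

lemma proj3 (m : CM 6) (hopt : m = Opt alpha6 m) {y : Fin 3 → ℝ} (hy : y ∈ PolySet alpha6 m)
    (t : ℝ) (ht1 : m.1 3 < t) (ht2 : t < m.2 3) :
    ∃ x ∈ PolySet alpha6 m, x 0 + x 1 = t := by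
  have hL1 := opt_low hopt hy lam31
  have hU1 := opt_high hopt hy lam31
  have hL2 := opt_low hopt hy lam32
  have hU2 := opt_high hopt hy lam32
  have hL3 := opt_low hopt hy lam33
  have hU3 := opt_high hopt hy lam33
  have hL4 := opt_low hopt hy lam34
  have hU4 := opt_high hopt hy lam34
  norm_num [Fin.sum_univ_six, eLow] at hL1 hL2 hL3 hL4
  norm_num [Fin.sum_univ_six, eHigh] at hU1 hU2 hU3 hU4
  have hy' := mem_poly.mp hy
  obtain ⟨⟨hy0a, hy0b⟩, ⟨hy1a, hy1b⟩, ⟨hy2a, hy2b⟩, ⟨hy3a, hy3b⟩, ⟨hy4a, hy4b⟩, ⟨hy5a, hy5b⟩⟩ := hy'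
  set A := max (max (m.1 0) (t - m.2 1)) (max (m.1 2 - m.2 4 + t) (m.1 5 - m.2 4)) with hAdef
  set B := min (min (m.2 0) (t - m.1 1)) (min (m.2 2 - m.1 4 + t) (m.2 5 - m.1 4)) with hBdef
  have hA1 : m.1 0 ≤ A := le_max_of_le_left (le_max_left _ _)
  have hA2 : t - m.2 1 ≤ A := le_max_of_le_left (le_max_right _ _)
  have hA3 : m.1 2 - m.2 4 + t ≤ A := le_max_of_le_right (le_max_left _ _)
  have hA4 : m.1 5 - m.2 4 ≤ A := le_max_of_le_right (le_max_right _ _)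
  have hB1 : B ≤ m.2 0 := min_le_of_left_le (min_le_left _ _)
  have hB2 : B ≤ t - m.1 1 := min_le_of_left_le (min_le_right _ _)
  have hB3 : B ≤ m.2 2 - m.1 4 + t := min_le_of_right_le (min_le_left _ _)
  have hB4 : B ≤ m.2 5 - m.1 4 := min_le_of_right_le (min_le_right _ _)
  have hAB : A < B := by
    rw [hAdef, hBdef]
    refine max_lt (max_lt ?_ ?_) (max_lt ?_ ?_) <;>
      refine lt_min (lt_min ?_ ?_) (lt_min ?_ ?_) <;> linarith
  set u := (A + B) / 2 with hudef
  have huA : A < u := by rw [hudef]; linarith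
  have huB : u < B := by rw [hudef]; linarith
  set C := max (m.1 2) (max (m.1 4 - t + u) (m.1 5 - t)) with hCdef
  set D := min (m.2 2) (min (m.2 4 - t + u) (m.2 5 - t)) with hDdef
  have hC1 : m.1 2 ≤ C := le_max_left _ _
  have hC2 : m.1 4 - t + u ≤ C := le_max_of_le_right (le_max_left _ _)
  have hC3 : m.1 5 - t ≤ C := le_max_of_le_right (le_max_right _ _)
  have hD1 : D ≤ m.2 2 := min_le_left _ _
  have hD2 : D ≤ m.2 4 - t + u := min_le_of_right_le (min_le_left _ _)
  have hD3 : D ≤ m.2 5 - t := min_le_of_right_le (min_le_right _ _)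
  have hCD : C < D := by
    rw [hCdef, hDdef]
    refine max_lt ?_ (max_lt ?_ ?_) <;>
      refine lt_min ?_ (lt_min ?_ ?_) <;> linarith
  set v := (C + D) / 2 with hvdef
  have hvC : C < v := by rw [hvdef]; linarith
  have hvD : v < D := by rw [hvdef]; linarith
  refine ⟨![u,t - u,v], ?_, by show u + (t - u) = t; ring⟩
  rw [mem_poly]
  refine ⟨⟨?_, ?_⟩, ⟨?_, ?_⟩, ⟨?_, ?_⟩, ⟨?_, ?_⟩, ⟨?_, ?_⟩, ⟨?_, ?_⟩⟩
  · show m.1 0 < u; linarith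
  · show u < m.2 0; linarith
  · show m.1 1 < t - u; linarith
  · show t - u < m.2 1; linarith
  · show m.1 2 < v; linarith
  · show v < m.2 2; linarith
  · show m.1 3 < u + (t - u); linarith
  · show u + (t - u) < m.2 3; linarith
  · show m.1 4 < (t - u) + v; linarith
  · show (t - u) + v < m.2 4; linarith
  · show m.1 5 < u + (t - u) + v; linarith
  · show u + (t - u) + v < m.2 5; linarith

lemma proj4 (m : CM 6) (hopt : m = Opt alpha6 m) {y : Fin 3 → ℝ} (hy : y ∈ PolySet alpha6 m)
    (t : ℝ) (ht1 : m.1 4 < t) (ht2 : t < m.2 4) :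
    ∃ x ∈ PolySet alpha6 m, x 1 + x 2 = t := by
  have hL1 := opt_low hopt hy lam41
  have hU1 := opt_high hopt hy lam41
  have hL2 := opt_low hopt hy lam42
  have hU2 := opt_high hopt hy lam42
  have hL3 := opt_low hopt hy lam43
  have hU3 := opt_high hopt hy lam43
  have hL4 := opt_low hopt hy lam44
  have hU4 := opt_high hopt hy lam44
  norm_num [Fin.sum_univ_six, eLow] at hL1 hL2 hL3 hL4
  norm_num [Fin.sum_univ_six, eHigh] at hU1 hU2 hU3 hU4
  have hy' := mem_poly.mp hy
  obtain ⟨⟨hy0a, hy0b⟩, ⟨hy1a, hy1b⟩, ⟨hy2a, hy2b⟩, ⟨hy3a, hy3b⟩, ⟨hy4a, hy4b⟩, ⟨hy5a, hy5b⟩⟩ := hy'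
  set A := max (max (m.1 2) (t - m.2 1)) (max (m.1 0 - m.2 3 + t) (m.1 5 - m.2 3)) with hAdef
  set B := min (min (m.2 2) (t - m.1 1)) (min (m.2 0 - m.1 3 + t) (m.2 5 - m.1 3)) with hBdef
  have hA1 : m.1 2 ≤ A := le_max_of_le_left (le_max_left _ _)
  have hA2 : t - m.2 1 ≤ A := le_max_of_le_left (le_max_right _ _)
  have hA3 : m.1 0 - m.2 3 + t ≤ A := le_max_of_le_right (le_max_left _ _)
  have hA4 : m.1 5 - m.2 3 ≤ A := le_max_of_le_right (le_max_right _ _)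
  have hB1 : B ≤ m.2 2 := min_le_of_left_le (min_le_left _ _)
  have hB2 : B ≤ t - m.1 1 := min_le_of_left_le (min_le_right _ _)
  have hB3 : B ≤ m.2 0 - m.1 3 + t := min_le_of_right_le (min_le_left _ _)
  have hB4 : B ≤ m.2 5 - m.1 3 := min_le_of_right_le (min_le_right _ _)
  have hAB : A < B := by
    rw [hAdef, hBdef]
    refine max_lt (max_lt ?_ ?_) (max_lt ?_ ?_) <;>
      refine lt_min (lt_min ?_ ?_) (lt_min ?_ ?_) <;> linarith
  set u := (A + B) / 2 with hudef
  have huA : A < u := by rw [hudef]; linarith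
  have huB : u < B := by rw [hudef]; linarith
  set C := max (m.1 0) (max (m.1 3 - t + u) (m.1 5 - t)) with hCdef
  set D := min (m.2 0) (min (m.2 3 - t + u) (m.2 5 - t)) with hDdef
  have hC1 : m.1 0 ≤ C := le_max_left _ _
  have hC2 : m.1 3 - t + u ≤ C := le_max_of_le_right (le_max_left _ _)
  have hC3 : m.1 5 - t ≤ C := le_max_of_le_right (le_max_right _ _)
  have hD1 : D ≤ m.2 0 := min_le_left _ _
  have hD2 : D ≤ m.2 3 - t + u := min_le_of_right_le (min_le_left _ _)
  have hD3 : D ≤ m.2 5 - t := min_le_of_right_le (min_le_right _ _)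
  have hCD : C < D := by
    rw [hCdef, hDdef]
    refine max_lt ?_ (max_lt ?_ ?_) <;>
      refine lt_min ?_ (lt_min ?_ ?_) <;> linarith
  set v := (C + D) / 2 with hvdef
  have hvC : C < v := by rw [hvdef]; linarith
  have hvD : v < D := by rw [hvdef]; linarith
  refine ⟨![v,t - u,u], ?_, by show (t - u) + u = t; ring⟩
  rw [mem_poly]
  refine ⟨⟨?_, ?_⟩, ⟨?_, ?_⟩, ⟨?_, ?_⟩, ⟨?_, ?_⟩, ⟨?_, ?_⟩, ⟨?_, ?_⟩⟩
  · show m.1 0 < v; linarith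
  · show v < m.2 0; linarith
  · show m.1 1 < t - u; linarith
  · show t - u < m.2 1; linarith
  · show m.1 2 < u; linarith
  · show u < m.2 2; linarith
  · show m.1 3 < v + (t - u); linarith
  · show v + (t - u) < m.2 3; linarith
  · show m.1 4 < (t - u) + u; linarith
  · show (t - u) + u < m.2 4; linarith
  · show m.1 5 < v + (t - u) + u; linarith
  · show v + (t - u) + u < m.2 5; linarith

lemma proj5 (m : CM 6) (hopt : m = Opt alpha6 m) {y : Fin 3 → ℝ} (hy : y ∈ PolySet alpha6 m)
    (t : ℝ) (ht1 : m.1 5 < t) (ht2 : t < m.2 5) :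
    ∃ x ∈ PolySet alpha6 m, x 0 + x 1 + x 2 = t := by
  have hL1 := opt_low hopt hy lam51
  have hU1 := opt_high hopt hy lam51
  have hL2 := opt_low hopt hy lam52
  have hU2 := opt_high hopt hy lam52
  have hL3 := opt_low hopt hy lam53
  have hU3 := opt_high hopt hy lam53
  have hL4 := opt_low hopt hy lam54
  have hU4 := opt_high hopt hy lam54
  norm_num [Fin.sum_univ_six, eLow] at hL1 hL2 hL3 hL4
  norm_num [Fin.sum_univ_six, eHigh] at hU1 hU2 hU3 hU4
  have hy' := mem_poly.mp hy
  obtain ⟨⟨hy0a, hy0b⟩, ⟨hy1a, hy1b⟩, ⟨hy2a, hy2b⟩, ⟨hy3a, hy3b⟩, ⟨hy4a, hy4b⟩, ⟨hy5a, hy5b⟩⟩ := hy'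
  set A := max (max (m.1 0) (t - m.2 4)) (max (t - m.2 1 - m.2 2) (m.1 3 - m.2 1)) with hAdef
  set B := min (min (m.2 0) (t - m.1 4)) (min (t - m.1 1 - m.1 2) (m.2 3 - m.1 1)) with hBdef
  have hA1 : m.1 0 ≤ A := le_max_of_le_left (le_max_left _ _)
  have hA2 : t - m.2 4 ≤ A := le_max_of_le_left (le_max_right _ _)
  have hA3 : t - m.2 1 - m.2 2 ≤ A := le_max_of_le_right (le_max_left _ _)
  have hA4 : m.1 3 - m.2 1 ≤ A := le_max_of_le_right (le_max_right _ _)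
  have hB1 : B ≤ m.2 0 := min_le_of_left_le (min_le_left _ _)
  have hB2 : B ≤ t - m.1 4 := min_le_of_left_le (min_le_right _ _)
  have hB3 : B ≤ t - m.1 1 - m.1 2 := min_le_of_right_le (min_le_left _ _)
  have hB4 : B ≤ m.2 3 - m.1 1 := min_le_of_right_le (min_le_right _ _)
  have hAB : A < B := by
    rw [hAdef, hBdef]
    refine max_lt (max_lt ?_ ?_) (max_lt ?_ ?_) <;>
      refine lt_min (lt_min ?_ ?_) (lt_min ?_ ?_) <;> linarith
  set u := (A + B) / 2 with hudef
  have huA : A < u := by rw [hudef]; linarith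
  have huB : u < B := by rw [hudef]; linarith
  set C := max (m.1 1) (max (t - u - m.2 2) (m.1 3 - u)) with hCdef
  set D := min (m.2 1) (min (t - u - m.1 2) (m.2 3 - u)) with hDdef
  have hC1 : m.1 1 ≤ C := le_max_left _ _
  have hC2 : t - u - m.2 2 ≤ C := le_max_of_le_right (le_max_left _ _)
  have hC3 : m.1 3 - u ≤ C := le_max_of_le_right (le_max_right _ _)
  have hD1 : D ≤ m.2 1 := min_le_left _ _
  have hD2 : D ≤ t - u - m.1 2 := min_le_of_right_le (min_le_left _ _)
  have hD3 : D ≤ m.2 3 - u := min_le_of_right_le (min_le_right _ _)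
  have hCD : C < D := by
    rw [hCdef, hDdef]
    refine max_lt ?_ (max_lt ?_ ?_) <;>
      refine lt_min ?_ (lt_min ?_ ?_) <;> linarith
  set v := (C + D) / 2 with hvdef
  have hvC : C < v := by rw [hvdef]; linarith
  have hvD : v < D := by rw [hvdef]; linarith
  refine ⟨![u,v,t - u - v], ?_, by show u + v + (t - u - v) = t; ring⟩
  rw [mem_poly]
  refine ⟨⟨?_, ?_⟩, ⟨?_, ?_⟩, ⟨?_, ?_⟩, ⟨?_, ?_⟩, ⟨?_, ?_⟩, ⟨?_, ?_⟩⟩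
  · show m.1 0 < u; linarith
  · show u < m.2 0; linarith
  · show m.1 1 < v; linarith
  · show v < m.2 1; linarith
  · show m.1 2 < t - u - v; linarith
  · show t - u - v < m.2 2; linarith
  · show m.1 3 < u + v; linarith
  · show u + v < m.2 3; linarith
  · show m.1 4 < v + (t - u - v); linarith
  · show v + (t - u - v) < m.2 4; linarith
  · show m.1 5 < u + v + (t - u - v); linarith
  · show u + v + (t - u - v) < m.2 5; linarith

lemma aux_ge {a b e : ℝ} (hab : a < b) (H : ∀ t, a < t → t < b → e < t) : e ≤ a := by
  by_contra h
  push_neg at h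
  have h1 : a < min b e := lt_min hab h
  have h2 := H ((a + min b e)/2) (by linarith) (by linarith [min_le_left b e])
  linarith [min_le_right b e]

lemma aux_le {a b e : ℝ} (hab : a < b) (H : ∀ t, a < t → t < b → t < e) : b ≤ e := by
  by_contra h
  push_neg at h
  have h1 : max a e < b := max_lt hab h
  have h2 := H ((max a e + b)/2) (by linarith [le_max_left a e]) (by linarith)
  linarith [le_max_right a e]

/-- constraints of a `σ₄₃₂₁`-symmetric optimized polytope in `(0,1)³`
pair up as stated. -/
theorem statement_16 (m : CM 6) (hopt : m = Opt alpha6 m)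
    (hne : (PolySet alpha6 m).Nonempty) (hsub : PolySet alpha6 m ⊆ cube3)
    (hsym : sigma4321aff '' PolySet alpha6 m = PolySet alpha6 m) :
    m.1 0 + m.2 2 = 1 ∧ m.2 0 + m.1 2 = 1 ∧ m.1 1 + m.2 1 = 1 ∧
    m.1 3 + m.2 4 = 2 ∧ m.2 3 + m.1 4 = 2 ∧ m.1 5 + m.2 5 = 3 := by
  obtain ⟨y, hy⟩ := hne
  have hyy := mem_poly.mp hy
  obtain ⟨⟨hy0a, hy0b⟩, ⟨hy1a, hy1b⟩, ⟨hy2a, hy2b⟩, ⟨hy3a, hy3b⟩, ⟨hy4a, hy4b⟩, ⟨hy5a, hy5b⟩⟩ := hyy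
  have hσ : ∀ x, x ∈ PolySet alpha6 m → sigma4321aff x ∈ PolySet alpha6 m := by
    intro x hx
    rw [← hsym]
    exact ⟨x, hx, rfl⟩
  have hσmem : ∀ x, x ∈ PolySet alpha6 m →
      ((m.1 0 < 1 - x 2 ∧ 1 - x 2 < m.2 0) ∧ (m.1 1 < 1 - x 1 ∧ 1 - x 1 < m.2 1) ∧
       (m.1 2 < 1 - x 0 ∧ 1 - x 0 < m.2 2) ∧
       (m.1 3 < 1 - x 2 + (1 - x 1) ∧ 1 - x 2 + (1 - x 1) < m.2 3) ∧
       (m.1 4 < 1 - x 1 + (1 - x 0) ∧ 1 - x 1 + (1 - x 0) < m.2 4) ∧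
       (m.1 5 < 1 - x 2 + (1 - x 1) + (1 - x 0) ∧ 1 - x 2 + (1 - x 1) + (1 - x 0) < m.2 5)) := by
    intro x hx
    have h3 := mem_poly.mp (hσ x hx)
    simpa [sigma4321aff] using h3
  -- pair 0 / 2
  have H0 : ∀ t, m.1 0 < t → t < m.2 0 → m.1 2 < 1 - t ∧ 1 - t < m.2 2 := by
    intro t h1 h2
    obtain ⟨x, hx, hxt⟩ := proj0 m hopt hy t h1 h2
    obtain ⟨-, -, ⟨c1, c2⟩, -, -, -⟩ := hσmem x hx
    rw [hxt] at c1 c2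
    exact ⟨c1, c2⟩
  have H2 : ∀ t, m.1 2 < t → t < m.2 2 → m.1 0 < 1 - t ∧ 1 - t < m.2 0 := by
    intro t h1 h2
    obtain ⟨x, hx, hxt⟩ := proj2 m hopt hy t h1 h2
    obtain ⟨⟨c1, c2⟩, -, -, -, -, -⟩ := hσmem x hx
    rw [hxt] at c1 c2
    exact ⟨c1, c2⟩
  have H1 : ∀ t, m.1 1 < t → t < m.2 1 → m.1 1 < 1 - t ∧ 1 - t < m.2 1 := by
    intro t h1 h2
    obtain ⟨x, hx, hxt⟩ := proj1 m hopt hy t h1 h2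
    obtain ⟨-, ⟨c1, c2⟩, -, -, -, -⟩ := hσmem x hx
    rw [hxt] at c1 c2
    exact ⟨c1, c2⟩
  have H3 : ∀ t, m.1 3 < t → t < m.2 3 → m.1 4 < 2 - t ∧ 2 - t < m.2 4 := by
    intro t h1 h2
    obtain ⟨x, hx, hxt⟩ := proj3 m hopt hy t h1 h2
    obtain ⟨-, -, -, -, ⟨c1, c2⟩, -⟩ := hσmem x hx
    constructor <;> linarith
  have H4 : ∀ t, m.1 4 < t → t < m.2 4 → m.1 3 < 2 - t ∧ 2 - t < m.2 3 := by
    intro t h1 h2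
    obtain ⟨x, hx, hxt⟩ := proj4 m hopt hy t h1 h2
    obtain ⟨-, -, -, ⟨c1, c2⟩, -, -⟩ := hσmem x hx
    constructor <;> linarith
  have H5 : ∀ t, m.1 5 < t → t < m.2 5 → m.1 5 < 3 - t ∧ 3 - t < m.2 5 := by
    intro t h1 h2
    obtain ⟨x, hx, hxt⟩ := proj5 m hopt hy t h1 h2
    obtain ⟨-, -, -, -, -, ⟨c1, c2⟩⟩ := hσmem x hx
    constructor <;> linarith
  have hlt0 : m.1 0 < m.2 0 := by linarith
  have hlt1 : m.1 1 < m.2 1 := by linarith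
  have hlt2 : m.1 2 < m.2 2 := by linarith
  have hlt3 : m.1 3 < m.2 3 := by linarith
  have hlt4 : m.1 4 < m.2 4 := by linarith
  have hlt5 : m.1 5 < m.2 5 := by linarith
  have a1 : (1 : ℝ) - m.2 2 ≤ m.1 0 := aux_ge hlt0 (fun t h1 h2 => by linarith [(H0 t h1 h2).2])
  have a2 : m.2 2 ≤ 1 - m.1 0 := aux_le hlt2 (fun t h1 h2 => by linarith [(H2 t h1 h2).1])
  have a3 : (1 : ℝ) - m.2 0 ≤ m.1 2 := aux_ge hlt2 (fun t h1 h2 => by linarith [(H2 t h1 h2).2])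
  have a4 : m.2 0 ≤ 1 - m.1 2 := aux_le hlt0 (fun t h1 h2 => by linarith [(H0 t h1 h2).1])
  have a5 : (1 : ℝ) - m.2 1 ≤ m.1 1 := aux_ge hlt1 (fun t h1 h2 => by linarith [(H1 t h1 h2).2])
  have a6 : m.2 1 ≤ 1 - m.1 1 := aux_le hlt1 (fun t h1 h2 => by linarith [(H1 t h1 h2).1])
  have b1 : (2 : ℝ) - m.2 4 ≤ m.1 3 := aux_ge hlt3 (fun t h1 h2 => by linarith [(H3 t h1 h2).2])
  have b2 : m.2 4 ≤ 2 - m.1 3 := aux_le hlt4 (fun t h1 h2 => by linarith [(H4 t h1 h2).1])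
  have b3 : (2 : ℝ) - m.2 3 ≤ m.1 4 := aux_ge hlt4 (fun t h1 h2 => by linarith [(H4 t h1 h2).2])
  have b4 : m.2 3 ≤ 2 - m.1 4 := aux_le hlt3 (fun t h1 h2 => by linarith [(H3 t h1 h2).1])
  have c1 : (3 : ℝ) - m.2 5 ≤ m.1 5 := aux_ge hlt5 (fun t h1 h2 => by linarith [(H5 t h1 h2).2])
  have c2 : m.2 5 ≤ 3 - m.1 5 := aux_le hlt5 (fun t h1 h2 => by linarith [(H5 t h1 h2).1])
  refine ⟨by linarith, by linarith, by linarith, by linarith, by linarith, by linarith⟩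
end
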